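/- arXiv:1609.03078 — 4 statements merged into one kernel-verified Lean document; each statement's English description precedes it below -/
import Mathlib

section
/- Let A ⊆ [0,1] be a set of positive Lebesgue outer measure, and let ⪯ be a total preorder on A (reflexive, transitive, with any two elements of A comparable) such that for every x ∈ A the initial segment {y ∈ A : y ⪯ x} is Lebesgue null. Define B₁ = {(x,y) ∈ A × A : x ⪯ y} and B₂ = {(x,y) ∈ A × A : y ⪯ x}. Then at least one of the three sets A ⊆ ℝ, B₁ ⊆ ℝ × ℝ, B₂ ⊆ ℝ × ℝ is not Lebesgue measurable (i.e., is not null-measurable with respect to Lebesgue measure / the volume measure). -/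
open MeasureTheory

/-- A null-measurable subset of the plane with all vertical sections null is null. -/
lemma null_of_sections_null (s : Set (ℝ × ℝ))
    (hs : NullMeasurableSet s (volume : Measure (ℝ × ℝ)))
    (h : ∀ x : ℝ, volume {y : ℝ | (x, y) ∈ s} = 0) :
    volume s = 0 := by
  obtain ⟨t, hts, htm, hst⟩ := hs.exists_measurable_subset_ae_eq
  rw [← measure_congr hst]
  show ((volume : Measure ℝ).prod volume) t = 0
  rw [Measure.measure_prod_null htm]
  refine Filter.Eventually.of_forall fun x => ?_
  refine measure_mono_null (fun y hy => ?_) (h x)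
  exact hts hy

/-- If `A ⊆ [0,1]` has positive Lebesgue outer measure and `r` is a total preorder on `A`
all of whose initial segments are Lebesgue null, then one of `A`,
`B₁ = {(x,y) ∈ A × A : x ⪯ y}`, `B₂ = {(x,y) ∈ A × A : y ⪯ x}` is not Lebesgue measurable. -/
theorem stmt0 (A : Set ℝ) (hA : A ⊆ Set.Icc 0 1) (hpos : 0 < volume A)
    (r : ℝ → ℝ → Prop)
    (hrefl : ∀ x ∈ A, r x x)
    (htrans : ∀ x ∈ A, ∀ y ∈ A, ∀ z ∈ A, r x y → r y z → r x z)
    (htotal : ∀ x ∈ A, ∀ y ∈ A, r x y ∨ r y x)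
    (hseg : ∀ x ∈ A, volume {y | y ∈ A ∧ r y x} = 0) :
    ¬ NullMeasurableSet A (volume : Measure ℝ) ∨
    ¬ NullMeasurableSet {p : ℝ × ℝ | p.1 ∈ A ∧ p.2 ∈ A ∧ r p.1 p.2}
        (volume : Measure (ℝ × ℝ)) ∨
    ¬ NullMeasurableSet {p : ℝ × ℝ | p.1 ∈ A ∧ p.2 ∈ A ∧ r p.2 p.1}
        (volume : Measure (ℝ × ℝ)) := by
  by_contra hcon
  push_neg at hcon
  obtain ⟨-, h1, h2⟩ := hcon
  set B₁ : Set (ℝ × ℝ) := {p : ℝ × ℝ | p.1 ∈ A ∧ p.2 ∈ A ∧ r p.1 p.2} with hB₁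
  set B₂ : Set (ℝ × ℝ) := {p : ℝ × ℝ | p.1 ∈ A ∧ p.2 ∈ A ∧ r p.2 p.1} with hB₂
  have hvB₂ : volume B₂ = 0 := by
    refine null_of_sections_null B₂ h2 fun x => ?_
    by_cases hx : x ∈ A
    · refine measure_mono_null (fun y hy => ?_) (hseg x hx)
      exact ⟨hy.2.1, hy.2.2⟩
    · refine measure_mono_null (fun y hy => absurd hy.1 hx) (measure_empty (μ := volume))
  have hvB₁ : volume B₁ = 0 := by
    have hswap : volume (Prod.swap ⁻¹' B₁) = volume B₁ := by
      exact (Measure.measurePreserving_swap (μ := (volume : Measure ℝ))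
        (ν := (volume : Measure ℝ))).measure_preimage h1
    rw [← hswap]
    refine null_of_sections_null _ ?_ fun x => ?_
    · exact h1.preimage (Measure.measurePreserving_swap (μ := (volume : Measure ℝ))
        (ν := (volume : Measure ℝ))).quasiMeasurePreserving
    · by_cases hx : x ∈ A
      · refine measure_mono_null (fun y hy => ?_) (hseg x hx)
        simp only [Set.mem_setOf_eq, Set.mem_preimage, Prod.swap_prod_mk, hB₁] at hy
        exact ⟨hy.1, hy.2.2⟩
      · refine measure_mono_null (fun y hy => ?_) (measure_empty (μ := volume))
        simp only [Set.mem_setOf_eq, Set.mem_preimage, Prod.swap_prod_mk, hB₁] at hy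
        exact absurd hy.2.1 hx
  have hsub : A ×ˢ A ⊆ B₁ ∪ B₂ := by
    rintro ⟨x, y⟩ ⟨hx, hy⟩
    rcases htotal x hx y hy with h | h
    · exact Or.inl ⟨hx, hy, h⟩
    · exact Or.inr ⟨hx, hy, h⟩
  have hprod : volume (A ×ˢ A) = volume A * volume A := by
    rw [Measure.volume_eq_prod, Measure.prod_prod]
  have hz : volume (A ×ˢ A) = 0 := by
    refine le_antisymm ?_ zero_le
    calc volume (A ×ˢ A) ≤ volume (B₁ ∪ B₂) := measure_mono hsub
      _ ≤ volume B₁ + volume B₂ := measure_union_le _ _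
      _ = 0 := by rw [hvB₁, hvB₂, add_zero]
  rw [hprod] at hz
  rcases mul_eq_zero.mp hz with h | h <;> exact absurd h hpos.ne'
end

section
/- Let A ⊆ 2^ω be a Borel subset of Cantor space with μ(A) < 1/1000. Then there exists a tree T ⊆ 2^{<ω} such that: lim(T) ∩ A = ∅; μ(lim(T)) = 1/2; and for every finite binary string η ∈ T, μ(lim(T) ∩ [η]) = k · 4^{−(|η|+1)} for some integer k with 1 ≤ k ≤ 4^{|η|+1}. -/
open MeasureTheory ENNReal

/-- The basic clopen set `[η]` of all `x ∈ 2^ω` extending the finite binary string `η`. -/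
def cylinder (η : List Bool) : Set (ℕ → Bool) :=
  {x | ∀ i : Fin η.length, x i = η.get i}

/-- `lim(T)`: the set of branches of a tree `T ⊆ 2^{<ω}`, i.e. all `x ∈ 2^ω` whose
finite initial segments all lie in `T`. -/
def limTree (T : Set (List Bool)) : Set (ℕ → Bool) :=
  {x | ∀ n : ℕ, (List.ofFn fun i : Fin n => x i) ∈ T}


namespace S4

noncomputable section
open Classical

def pre (x : ℕ → Bool) (n : ℕ) : List Bool := List.ofFn fun i : Fin n => x i

@[simp] lemma pre_length (x : ℕ → Bool) (n : ℕ) : (pre x n).length = n := List.length_ofFn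

@[simp] lemma pre_zero (x : ℕ → Bool) : pre x 0 = [] := rfl

lemma pre_getElem (x : ℕ → Bool) (n i : ℕ) (h : i < (pre x n).length) :
    (pre x n)[i] = x i := by
  simp [pre]

lemma pre_succ (x : ℕ → Bool) (n : ℕ) : pre x (n+1) = pre x n ++ [x n] := by
  apply List.ext_getElem (by simp)
  intro i h1 h2
  rcases Nat.lt_or_ge i n with h | h
  · rw [pre_getElem, List.getElem_append_left (by simpa using h), pre_getElem]
  · have : i = n := by simp at h1; omega
    subst this
    rw [pre_getElem]
    simp

lemma mem_cylinder_iff_pre {x : ℕ → Bool} {η : List Bool} :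
    x ∈ cylinder η ↔ pre x η.length = η := by
  constructor
  · intro h
    apply List.ext_getElem (by simp)
    intro i h1 h2
    rw [pre_getElem]
    exact h ⟨i, h2⟩
  · intro h i
    have h2 : (i : ℕ) < (pre x η.length).length := by simp [i.2]
    have := List.getElem_of_eq h h2
    rw [pre_getElem] at this
    simpa using this

lemma mem_pre_cylinder (x : ℕ → Bool) (n : ℕ) : x ∈ cylinder (pre x n) := by
  rw [mem_cylinder_iff_pre, pre_length]

lemma mem_cylinder_pre_iff {x y : ℕ → Bool} {n : ℕ} :
    y ∈ cylinder (pre x n) ↔ ∀ i < n, y i = x i := by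
  rw [mem_cylinder_iff_pre, pre_length]
  constructor
  · intro h i hi
    have h2 : i < (pre y n).length := by simpa using hi
    have := List.getElem_of_eq h h2
    rw [pre_getElem] at this
    rw [this, pre_getElem]
  · intro h
    apply List.ext_getElem (by simp)
    intro i h1 h2
    rw [pre_getElem, pre_getElem]
    exact h i (by simpa using h1)

lemma pre_prefix (x : ℕ → Bool) {m n : ℕ} (h : m ≤ n) : pre x m <+: pre x n := by
  induction n with
  | zero => simp at h; simp [h]
  | succ n ih =>
    rcases Nat.lt_or_ge m (n+1) with h' | h'
    · have := ih (by omega)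
      rw [pre_succ]
      exact this.trans (List.prefix_append _ _)
    · have : m = n + 1 := by omega
      simp [this]

lemma take_pre (x : ℕ → Bool) {m n : ℕ} (h : m ≤ n) : (pre x n).take m = pre x m := by
  have := List.prefix_iff_eq_take.1 (pre_prefix x h)
  rw [pre_length] at this
  exact this.symm

lemma cylinder_mono {η ν : List Bool} (h : η <+: ν) : cylinder ν ⊆ cylinder η := by
  intro x hx
  rw [mem_cylinder_iff_pre] at hx ⊢
  have hlen : η.length ≤ ν.length := h.length_le
  have h2 := List.prefix_iff_eq_take.1 h
  rw [← hx, take_pre x hlen] at h2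
  exact h2.symm

lemma eq_pre_of_mem {x : ℕ → Bool} {η : List Bool} (h : x ∈ cylinder η) :
    η = pre x η.length := (mem_cylinder_iff_pre.1 h).symm

@[simp] lemma cylinder_nil : cylinder ([] : List Bool) = Set.univ := by
  ext x
  simp only [Set.mem_univ, iff_true]
  intro i
  exact absurd i.2 (by simp)

lemma cylinder_append (η : List Bool) (b : Bool) :
    cylinder (η ++ [b]) = cylinder η ∩ {x | x η.length = b} := by
  ext x
  simp only [mem_cylinder_iff_pre, Set.mem_inter_iff, Set.mem_setOf_eq,
    List.length_append, List.length_singleton]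
  constructor
  · intro h
    have h1 : pre x (η.length + 1) = pre x η.length ++ [x η.length] := pre_succ _ _
    rw [h1] at h
    have := List.append_inj h (by simp)
    refine ⟨this.1, by simpa using this.2⟩
  · rintro ⟨h1, h2⟩
    rw [pre_succ, h1, h2]

lemma cylinder_split (η : List Bool) :
    cylinder η = cylinder (η ++ [false]) ∪ cylinder (η ++ [true]) := by
  rw [cylinder_append, cylinder_append]
  ext x
  rcases Bool.eq_false_or_eq_true (x η.length) with h | h <;> simp [h]

lemma cylinder_append_disjoint (η : List Bool) :
    cylinder (η ++ [false]) ∩ cylinder (η ++ [true]) = ∅ := by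
  rw [cylinder_append, cylinder_append]
  ext x
  simp only [Set.mem_inter_iff, Set.mem_setOf_eq, Set.mem_empty_iff_false, iff_false]
  rintro ⟨⟨-, h1⟩, -, h2⟩
  rw [h1] at h2; exact Bool.false_ne_true h2

lemma cylinder_disjoint_of_ne {η ν : List Bool} (hl : η.length = ν.length) (hne : η ≠ ν) :
    cylinder η ∩ cylinder ν = ∅ := by
  ext x
  simp only [Set.mem_inter_iff, Set.mem_empty_iff_false, iff_false]
  rintro ⟨h1, h2⟩
  rw [mem_cylinder_iff_pre] at h1 h2
  exact hne (h1 ▸ h2 ▸ (by rw [hl]))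

lemma measurableSet_cylinder (η : List Bool) : MeasurableSet (cylinder η) := by
  have : cylinder η = ⋂ i : Fin η.length, {x : ℕ → Bool | x i = η.get i} := by
    ext x
    simp only [Set.mem_iInter]
    exact Iff.rfl
  rw [this]
  exact MeasurableSet.iInter fun i => (measurable_pi_apply (i : ℕ)) (MeasurableSet.singleton _)

/-! ### Part 2: lexicographic tails and exact cuts -/

def lexTail (s : ℕ → Bool) : Set (ℕ → Bool) :=
  ⋃ n ∈ {n : ℕ | s n = false}, cylinder (pre s n ++ [true])

def lexLow (s : ℕ → Bool) : Set (ℕ → Bool) :=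
  ⋃ n ∈ {n : ℕ | s n = true}, cylinder (pre s n ++ [false])

lemma measurableSet_lexTail (s : ℕ → Bool) : MeasurableSet (lexTail s) :=
  MeasurableSet.biUnion (Set.to_countable _) fun _ _ => measurableSet_cylinder _

lemma measurableSet_lexLow (s : ℕ → Bool) : MeasurableSet (lexLow s) :=
  MeasurableSet.biUnion (Set.to_countable _) fun _ _ => measurableSet_cylinder _

lemma mem_cyl_pre_append {s x : ℕ → Bool} {n : ℕ} {b : Bool} :
    x ∈ cylinder (pre s n ++ [b]) ↔ (∀ i < n, x i = s i) ∧ x n = b := by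
  rw [cylinder_append, pre_length]
  constructor
  · rintro ⟨h1, h2⟩
    exact ⟨mem_cylinder_pre_iff.1 h1, h2⟩
  · rintro ⟨h1, h2⟩
    exact ⟨mem_cylinder_pre_iff.2 h1, h2⟩

lemma compl_lexTail (s : ℕ → Bool) : (lexTail s)ᶜ = lexLow s ∪ {s} := by
  ext x
  simp only [Set.mem_compl_iff, Set.mem_union, Set.mem_singleton_iff]
  constructor
  · intro h
    by_cases hxs : x = s
    · exact Or.inr hxs
    · left
      have hne : ∃ n, x n ≠ s n := by
        by_contra hc
        push_neg at hc
        exact hxs (funext hc)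
      classical
      let N := Nat.find hne
      have hN : x N ≠ s N := Nat.find_spec hne
      have hagree : ∀ i < N, x i = s i := fun i hi => by
        have := Nat.find_min hne hi
        simpa using this
      rcases Bool.eq_false_or_eq_true (s N) with hsN | hsN
      · refine Set.mem_biUnion (show N ∈ {n : ℕ | s n = true} from hsN) ?_
        rw [mem_cyl_pre_append]
        refine ⟨hagree, ?_⟩
        rcases Bool.eq_false_or_eq_true (x N) with h' | h'
        · exact absurd (h'.trans hsN.symm) hN
        · exact h'
      · exfalso
        apply h
        refine Set.mem_biUnion (show N ∈ {n : ℕ | s n = false} from hsN) ?_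
        rw [mem_cyl_pre_append]
        refine ⟨hagree, ?_⟩
        rcases Bool.eq_false_or_eq_true (x N) with h' | h'
        · exact h'
        · exact absurd (h'.trans hsN.symm) hN
  · intro h hmem
    obtain ⟨m, hm, hxm⟩ := by
      simpa only [lexTail, Set.mem_iUnion, exists_prop] using hmem
    rw [mem_cyl_pre_append] at hxm
    simp only [Set.mem_setOf_eq] at hm
    rcases h with h | h
    · obtain ⟨n, hn, hxn⟩ := by
        simpa only [lexLow, Set.mem_iUnion, exists_prop] using h
      rw [mem_cyl_pre_append] at hxn
      simp only [Set.mem_setOf_eq] at hn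
      rcases Nat.lt_trichotomy n m with hlt | heq | hlt
      · have e := hxm.1 n hlt
        rw [hn, hxn.2] at e
        exact Bool.false_ne_true e
      · subst heq
        rw [hn] at hm
        exact Bool.noConfusion hm
      · have e := hxn.1 m hlt
        rw [hm, hxm.2] at e
        exact Bool.noConfusion e
    · subst h
      rw [hm] at hxm
      exact Bool.false_ne_true hxm.2

lemma exists_cyl_subset_lexTail {s x : ℕ → Bool} (h : x ∈ lexTail s) :
    ∃ m, cylinder (pre x m) ⊆ lexTail s := by
  obtain ⟨n, hn, hxn⟩ := by
    simpa only [lexTail, Set.mem_iUnion, exists_prop] using h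
  refine ⟨n + 1, ?_⟩
  have : pre x (n+1) = pre s n ++ [true] := by
    have := mem_cylinder_iff_pre.1 hxn
    rwa [List.length_append, List.length_singleton, pre_length] at this
  rw [this]
  exact fun y hy => Set.mem_biUnion hn hy

/-! ### the greedy exact cut -/

section Cut

variable (μ : Measure (ℕ → Bool))

def below (l : List Bool) : Set (ℕ → Bool) :=
  ⋃ i ∈ {i : ℕ | i < l.length ∧ l.getD i false = true}, cylinder (l.take i ++ [false])

lemma measurableSet_below (l : List Bool) : MeasurableSet (below l) :=
  MeasurableSet.biUnion (Set.to_countable _) fun _ _ => measurableSet_cylinder _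

@[simp] lemma below_nil : below ([] : List Bool) = ∅ := by
  simp [below]

lemma getD_concat_length (l : List Bool) (b d : Bool) : (l ++ [b]).getD l.length d = b := by
  simp [List.getD_eq_getElem?_getD, List.getElem?_append_right]

lemma getD_concat_at (l : List Bool) (b d : Bool) {n : ℕ} (h : l.length = n) :
    (l ++ [b]).getD n d = b := by subst h; exact getD_concat_length l b d

lemma mem_below_iff {l : List Bool} {x : ℕ → Bool} :
    x ∈ below l ↔ ∃ i, i < l.length ∧ l.getD i false = true ∧ x ∈ cylinder (l.take i ++ [false]) := by
  simp [below, and_assoc]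

lemma below_concat_false (l : List Bool) : below (l ++ [false]) = below l := by
  ext x
  rw [mem_below_iff, mem_below_iff]
  constructor
  · rintro ⟨i, hi, hg, hx⟩
    rcases Nat.lt_or_ge i l.length with h | h
    · exact ⟨i, h, by rwa [List.getD_append _ _ _ _ h] at hg,
        by rwa [List.take_append_of_le_length h.le] at hx⟩
    · have hieq : i = l.length := by simp at hi; omega
      subst hieq
      rw [getD_concat_length] at hg
      exact absurd hg Bool.false_ne_true
  · rintro ⟨i, hi, hg, hx⟩
    exact ⟨i, by simp; omega, by rwa [List.getD_append _ _ _ _ hi],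
      by rwa [List.take_append_of_le_length hi.le]⟩

lemma below_concat_true (l : List Bool) :
    below (l ++ [true]) = below l ∪ cylinder (l ++ [false]) := by
  ext x
  rw [mem_below_iff]
  simp only [Set.mem_union]
  constructor
  · rintro ⟨i, hi, hg, hx⟩
    rcases Nat.lt_or_ge i l.length with h | h
    · exact Or.inl (mem_below_iff.2 ⟨i, h, by rwa [List.getD_append _ _ _ _ h] at hg,
        by rwa [List.take_append_of_le_length h.le] at hx⟩)
    · have hieq : i = l.length := by simp at hi; omega
      subst hieq
      rw [List.take_left] at hx
      exact Or.inr hx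
  · rintro (h | h)
    · obtain ⟨i, hi, hg, hx⟩ := mem_below_iff.1 h
      exact ⟨i, by simp; omega, by rwa [List.getD_append _ _ _ _ hi],
        by rwa [List.take_append_of_le_length hi.le]⟩
    · exact ⟨l.length, by simp, by rw [getD_concat_length], by rwa [List.take_left]⟩

lemma below_inter_cylinder (l : List Bool) : below l ∩ cylinder l = ∅ := by
  ext x
  simp only [Set.mem_inter_iff, Set.mem_empty_iff_false, iff_false, not_and]
  intro hb hc
  obtain ⟨i, hi, hg, hx⟩ := mem_below_iff.1 hb
  have hlen : (l.take i).length = i := by simp [hi.le]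
  have h1 : x i = false := by
    rw [cylinder_append] at hx
    have := hx.2
    rwa [hlen] at this
  have h2 : x i = true := by
    have hp := mem_cylinder_iff_pre.1 hc
    have h3 := List.getElem_of_eq hp (show i < (pre x l.length).length by simp [hi])
    rw [pre_getElem] at h3
    rw [List.getD_eq_getElem l false hi] at hg
    exact h3.trans hg
  rw [h1] at h2
  exact Bool.false_ne_true h2

lemma below_disjoint_cyl_append (l : List Bool) (b : Bool) :
    Disjoint (below l) (cylinder (l ++ [b])) := by
  rw [Set.disjoint_iff_inter_eq_empty]
  apply Set.eq_empty_of_subset_empty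
  intro x hx
  rw [← below_inter_cylinder l]
  exact ⟨hx.1, cylinder_mono (List.prefix_append _ _) hx.2⟩

lemma lexLow_eq_iUnion_below (s : ℕ → Bool) : lexLow s = ⋃ n, below (pre s n) := by
  ext x
  simp only [lexLow, Set.mem_iUnion, exists_prop, Set.mem_setOf_eq]
  constructor
  · rintro ⟨n, hn, hx⟩
    refine ⟨n+1, mem_below_iff.2 ⟨n, by simp, ?_, ?_⟩⟩
    · rw [List.getD_eq_getElem _ _ (by simp : n < (pre s (n+1)).length), pre_getElem, hn]
    · rwa [take_pre s (by omega)]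
  · rintro ⟨n, hb⟩
    obtain ⟨i, hi, hg, hx⟩ := mem_below_iff.1 hb
    rw [pre_length] at hi
    refine ⟨i, ?_, ?_⟩
    · rw [List.getD_eq_getElem _ _ (by simp [hi] : i < (pre s n).length), pre_getElem] at hg
      exact hg
    · rwa [take_pre s hi.le] at hx

variable {S : Set (ℕ → Bool)} {t : ℝ≥0∞}

def grSeq (S : Set (ℕ → Bool)) (t : ℝ≥0∞) : ℕ → List Bool
  | 0 => []
  | n+1 => grSeq S t n ++
      [if t ≤ μ (S ∩ below (grSeq S t n)) + μ (S ∩ cylinder (grSeq S t n ++ [false]))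
       then false else true]

@[simp] lemma grSeq_length (S : Set (ℕ → Bool)) (t : ℝ≥0∞) : ∀ n, (grSeq μ S t n).length = n
  | 0 => rfl
  | n+1 => by
    show (grSeq μ S t n ++ [_]).length = n + 1
    rw [List.length_append, grSeq_length S t n]
    rfl

def cutFun (S : Set (ℕ → Bool)) (t : ℝ≥0∞) : ℕ → Bool :=
  fun n => (grSeq μ S t (n+1)).getD n false

lemma pre_cutFun (S : Set (ℕ → Bool)) (t : ℝ≥0∞) : ∀ n, pre (cutFun μ S t) n = grSeq μ S t n
  | 0 => by simp [grSeq]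
  | n+1 => by
    rw [pre_succ, pre_cutFun S t n]
    show grSeq μ S t n ++ [(grSeq μ S t (n+1)).getD n false] = grSeq μ S t (n+1)
    have he : grSeq μ S t (n+1) = grSeq μ S t n ++
        [if t ≤ μ (S ∩ below (grSeq μ S t n)) + μ (S ∩ cylinder (grSeq μ S t n ++ [false]))
         then false else true] := rfl
    rw [he]
    congr 1
    rw [getD_concat_at _ _ _ (grSeq_length μ S t n)]

lemma meas_inter_cyl_split (hS : MeasurableSet S) (l : List Bool) :
    μ (S ∩ cylinder l) = μ (S ∩ cylinder (l ++ [false])) + μ (S ∩ cylinder (l ++ [true])) := by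
  conv_lhs => rw [cylinder_split l]
  rw [Set.inter_union_distrib_left]
  apply measure_union _ (hS.inter (measurableSet_cylinder _))
  rw [Set.disjoint_iff_inter_eq_empty]
  apply Set.eq_empty_of_subset_empty
  intro x hx
  rw [← cylinder_append_disjoint l]
  exact ⟨hx.1.2, hx.2.2⟩

lemma grSeq_inv (hS : MeasurableSet S) (ht : t ≤ μ S) [IsProbabilityMeasure μ] :
    ∀ n, μ (S ∩ below (grSeq μ S t n)) ≤ t ∧
      t ≤ μ (S ∩ below (grSeq μ S t n)) + μ (S ∩ cylinder (grSeq μ S t n))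
  | 0 => by
    constructor
    · simp [grSeq]
    · simpa [grSeq] using ht
  | n+1 => by
    obtain ⟨ih1, ih2⟩ := grSeq_inv hS ht n
    have he : grSeq μ S t (n+1) = grSeq μ S t n ++
        [if t ≤ μ (S ∩ below (grSeq μ S t n)) + μ (S ∩ cylinder (grSeq μ S t n ++ [false]))
         then false else true] := rfl
    by_cases hc : t ≤ μ (S ∩ below (grSeq μ S t n)) + μ (S ∩ cylinder (grSeq μ S t n ++ [false]))
    · rw [he, if_pos hc, below_concat_false]
      exact ⟨ih1, hc⟩
    · rw [he, if_neg hc, below_concat_true]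
      have hadd : μ (S ∩ (below (grSeq μ S t n) ∪ cylinder (grSeq μ S t n ++ [false])))
          = μ (S ∩ below (grSeq μ S t n)) + μ (S ∩ cylinder (grSeq μ S t n ++ [false])) := by
        rw [Set.inter_union_distrib_left]
        apply measure_union _ (hS.inter (measurableSet_cylinder _))
        exact ((below_disjoint_cyl_append _ false).mono Set.inter_subset_right Set.inter_subset_right)
      rw [hadd]
      refine ⟨(lt_of_not_ge hc).le, ?_⟩
      calc t ≤ μ (S ∩ below (grSeq μ S t n)) + μ (S ∩ cylinder (grSeq μ S t n)) := ih2
      _ = μ (S ∩ below (grSeq μ S t n)) + (μ (S ∩ cylinder (grSeq μ S t n ++ [false]))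
            + μ (S ∩ cylinder (grSeq μ S t n ++ [true]))) := by rw [meas_inter_cyl_split μ hS]
      _ = μ (S ∩ below (grSeq μ S t n)) + μ (S ∩ cylinder (grSeq μ S t n ++ [false]))
            + μ (S ∩ cylinder (grSeq μ S t n ++ [true])) := by rw [add_assoc]

lemma exists_lexCut [IsProbabilityMeasure μ]
    (hμ : ∀ η : List Bool, μ (cylinder η) = ((2 : ℝ≥0∞) ^ η.length)⁻¹)
    (hS : MeasurableSet S) (ht : t ≤ μ S) : ∃ s : ℕ → Bool, μ (S \ lexTail s) = t := by
  refine ⟨cutFun μ S t, ?_⟩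
  set s := cutFun μ S t with hs
  have hpre : ∀ n, pre s n = grSeq μ S t n := pre_cutFun μ S t
  have hlow : lexLow s = ⋃ n, below (grSeq μ S t n) := by
    rw [lexLow_eq_iUnion_below]
    exact Set.iUnion_congr fun n => by rw [hpre n]
  have hmono : Monotone fun n => S ∩ below (grSeq μ S t n) := by
    apply monotone_nat_of_le_succ
    intro n
    apply Set.inter_subset_inter_right
    have he : grSeq μ S t (n+1) = grSeq μ S t n ++
        [if t ≤ μ (S ∩ below (grSeq μ S t n)) + μ (S ∩ cylinder (grSeq μ S t n ++ [false]))
         then false else true] := rfl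
    rw [he]
    by_cases hc : t ≤ μ (S ∩ below (grSeq μ S t n)) + μ (S ∩ cylinder (grSeq μ S t n ++ [false]))
    · rw [if_pos hc, below_concat_false]
    · rw [if_neg hc, below_concat_true]
      exact Set.subset_union_left
  have hsup : μ (S ∩ lexLow s) = ⨆ n, μ (S ∩ below (grSeq μ S t n)) := by
    rw [hlow, Set.inter_iUnion]
    exact hmono.directed_le.measure_iUnion
  have hPle : ∀ n, μ (S ∩ below (grSeq μ S t n)) ≤ t := fun n => (grSeq_inv μ hS ht n).1
  have h2n : ∀ n, μ (S ∩ cylinder (grSeq μ S t n)) ≤ 2⁻¹ ^ n := fun n => by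
    calc μ (S ∩ cylinder (grSeq μ S t n)) ≤ μ (cylinder (grSeq μ S t n)) :=
      measure_mono Set.inter_subset_right
    _ = ((2 : ℝ≥0∞) ^ n)⁻¹ := by rw [hμ, grSeq_length]
    _ = 2⁻¹ ^ n := by rw [ENNReal.inv_pow]
  have hsup_t : (⨆ n, μ (S ∩ below (grSeq μ S t n))) = t := by
    apply le_antisymm (iSup_le hPle)
    apply ENNReal.le_of_forall_pos_le_add
    intro ε hε _
    obtain ⟨n, hn⟩ := ENNReal.exists_inv_two_pow_lt (ENNReal.coe_ne_zero.2 hε.ne')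
    calc t ≤ μ (S ∩ below (grSeq μ S t n)) + μ (S ∩ cylinder (grSeq μ S t n)) :=
      (grSeq_inv μ hS ht n).2
    _ ≤ (⨆ m, μ (S ∩ below (grSeq μ S t m))) + ε :=
      add_le_add (le_iSup (fun m => μ (S ∩ below (grSeq μ S t m))) n) ((h2n n).trans hn.le)
  have hsingleton : μ {s} = 0 := by
    apply le_antisymm _ zero_le
    apply ENNReal.le_of_forall_pos_le_add
    intro ε hε _
    obtain ⟨n, hn⟩ := ENNReal.exists_inv_two_pow_lt (ENNReal.coe_ne_zero.2 hε.ne')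
    calc μ {s} ≤ μ (cylinder (pre s n)) := measure_mono (fun y hy => by
      rw [Set.mem_singleton_iff] at hy; rw [hy]; exact mem_pre_cylinder s n)
    _ = 2⁻¹ ^ n := by rw [hμ, pre_length, ENNReal.inv_pow]
    _ ≤ 0 + ε := by rw [zero_add]; exact hn.le
  have hdiff : S \ lexTail s = (S ∩ lexLow s) ∪ (S ∩ {s}) := by
    rw [Set.diff_eq, compl_lexTail, Set.inter_union_distrib_left]
  rw [hdiff]
  apply le_antisymm
  · calc μ ((S ∩ lexLow s) ∪ (S ∩ {s})) ≤ μ (S ∩ lexLow s) + μ (S ∩ {s}) := measure_union_le _ _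
    _ ≤ t + 0 := add_le_add (le_of_eq (hsup.trans hsup_t))
        (le_trans (measure_mono Set.inter_subset_right) hsingleton.le)
    _ = t := add_zero t
  · calc t = μ (S ∩ lexLow s) := (hsup.trans hsup_t).symm
    _ ≤ μ ((S ∩ lexLow s) ∪ (S ∩ {s})) := measure_mono Set.subset_union_left

end Cut


/-! ### Part 3: the recursive construction -/

structure ND where
  k : ℕ
  A : Set (ℕ → Bool)
  com : Set (ℕ → Bool)

section Main

variable (μ : Measure (ℕ → Bool)) (U : Set (ℕ → Bool))

noncomputable def lexCut (S : Set (ℕ → Bool)) (t : ℝ≥0∞) : ℕ → Bool :=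
  if h : ∃ s : ℕ → Bool, μ (S \ lexTail s) = t then h.choose else default

lemma lexCut_spec [IsProbabilityMeasure μ]
    (hμ : ∀ η : List Bool, μ (cylinder η) = ((2 : ℝ≥0∞) ^ η.length)⁻¹)
    {S : Set (ℕ → Bool)} {t : ℝ≥0∞} (hS : MeasurableSet S) (ht : t ≤ μ S) :
    μ (S \ lexTail (lexCut μ S t)) = t := by
  have h := exists_lexCut μ hμ hS ht
  rw [lexCut, dif_pos h]
  exact h.choose_spec

/-- `w`-unit at a node of length `n+1` (children of a node of length `n`). -/
noncomputable def ndm0 (η : List Bool) (P : ND) : ℕ :=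
  ⌊(μ (P.A ∩ cylinder (η ++ [false])) / ((4 : ℝ≥0∞) ^ (η.length + 2))⁻¹).toNNReal⌋₊

noncomputable def ndk0 (η : List Bool) (P : ND) : ℕ :=
  min (4 * P.k) (ndm0 μ η P - 1)

noncomputable def ndkb (η : List Bool) (P : ND) (b : Bool) : ℕ :=
  if P.k = 0 then 0 else if b then 4 * P.k - ndk0 μ η P else ndk0 μ η P

noncomputable def step (η : List Bool) (P : ND) (b : Bool) : ND :=
  if ndkb μ η P b = 0 then ⟨0, ∅, cylinder (η ++ [b])⟩
  else
    ⟨ndkb μ η P b,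
     (P.A ∩ cylinder (η ++ [b])) \ lexTail (lexCut μ (P.A ∩ cylinder (η ++ [b]))
        ((ndkb μ η P b + 1) * ((4 : ℝ≥0∞) ^ (η.length + 2))⁻¹)),
     cylinder (η ++ [b]) ∩ lexTail (lexCut μ (P.A ∩ cylinder (η ++ [b]))
        ((ndkb μ η P b + 1) * ((4 : ℝ≥0∞) ^ (η.length + 2))⁻¹))⟩

noncomputable def root : ND :=
  ⟨2, Uᶜ \ lexTail (lexCut μ Uᶜ (3 * ((4 : ℝ≥0∞) ^ (1 : ℕ))⁻¹)),
      lexTail (lexCut μ Uᶜ (3 * ((4 : ℝ≥0∞) ^ (1 : ℕ))⁻¹))⟩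

noncomputable def nodeAux : List Bool → ND
  | [] => root μ U
  | b :: l => step μ l.reverse (nodeAux l) b

noncomputable def node (η : List Bool) : ND := nodeAux μ U η.reverse

lemma node_nil : node μ U [] = root μ U := rfl

lemma node_concat (η : List Bool) (b : Bool) :
    node μ U (η ++ [b]) = step μ η (node μ U η) b := by
  show nodeAux μ U (η ++ [b]).reverse = _
  rw [List.reverse_append]
  show step μ (η.reverse.reverse) (nodeAux μ U η.reverse) b = _
  rw [List.reverse_reverse]
  rfl

/-! structural facts about `step` -/

variable {μ U}

lemma step_k (η : List Bool) (P : ND) (b : Bool) : (step μ η P b).k = ndkb μ η P b := by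
  by_cases h : ndkb μ η P b = 0 <;> simp [step, h]

lemma ndkb_of_parent_zero (η : List Bool) (P : ND) (b : Bool) (h : P.k = 0) :
    ndkb μ η P b = 0 := by simp [ndkb, h]

lemma ndkb_sum (η : List Bool) (P : ND) (h : P.k ≠ 0) :
    ndkb μ η P false + ndkb μ η P true = 4 * P.k := by
  have h0 : ndk0 μ η P ≤ 4 * P.k := min_le_left _ _
  simp only [ndkb, if_neg h]
  simp only [Bool.false_eq_true, if_false, if_true]
  omega

lemma step_pruned (η : List Bool) (P : ND) (b : Bool) (h : ndkb μ η P b = 0) :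
    step μ η P b = ⟨0, ∅, cylinder (η ++ [b])⟩ := by rw [step, if_pos h]

lemma step_A_subset (η : List Bool) (P : ND) (b : Bool) :
    (step μ η P b).A ⊆ P.A ∩ cylinder (η ++ [b]) := by
  by_cases h : ndkb μ η P b = 0
  · rw [step_pruned η P b h]; exact Set.empty_subset _
  · rw [step, if_neg h]; exact Set.diff_subset

lemma step_com_subset (η : List Bool) (P : ND) (b : Bool) :
    (step μ η P b).com ⊆ cylinder (η ++ [b]) := by
  by_cases h : ndkb μ η P b = 0
  · rw [step_pruned η P b h]
  · rw [step, if_neg h]; exact Set.inter_subset_left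

lemma step_rel (η : List Bool) (P : ND) (b : Bool) :
    (step μ η P b).A = (P.A ∩ cylinder (η ++ [b])) \ (step μ η P b).com := by
  by_cases h : ndkb μ η P b = 0
  · rw [step_pruned η P b h]
    exact (Set.diff_eq_empty.2 Set.inter_subset_right).symm
  · rw [step, if_neg h]
    ext x
    simp only [Set.mem_diff, Set.mem_inter_iff]
    tauto

lemma measurableSet_step_com (η : List Bool) (P : ND) (b : Bool) :
    MeasurableSet (step μ η P b).com := by
  by_cases h : ndkb μ η P b = 0
  · rw [step_pruned η P b h]; exact measurableSet_cylinder _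
  · rw [step, if_neg h]
    exact (measurableSet_cylinder _).inter (measurableSet_lexTail _)

/-! the key feasibility estimate -/

lemma ndkb_cut_le [IsProbabilityMeasure μ] {η : List Bool} {P : ND}
    (hA : MeasurableSet P.A) (hsub : P.A ⊆ cylinder η)
    (hm : μ P.A = (P.k + 1) * ((4 : ℝ≥0∞) ^ (η.length + 1))⁻¹) (hk : P.k ≠ 0)
    (b : Bool) (hkb : ndkb μ η P b ≠ 0) :
    ((ndkb μ η P b : ℝ≥0∞) + 1) * ((4 : ℝ≥0∞) ^ (η.length + 2))⁻¹
      ≤ μ (P.A ∩ cylinder (η ++ [b])) := by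
  set n := η.length with hn
  set w : ℝ≥0∞ := ((4 : ℝ≥0∞) ^ (n + 2))⁻¹ with hw
  have hw0 : w ≠ 0 := ENNReal.inv_ne_zero.2 (ENNReal.pow_ne_top (by norm_num))
  have hwt : w ≠ ⊤ := ENNReal.inv_ne_top.2 (pow_ne_zero _ (by norm_num))
  set a0 := μ (P.A ∩ cylinder (η ++ [false])) with ha0
  set a1 := μ (P.A ∩ cylinder (η ++ [true])) with ha1
  have ha0t : a0 ≠ ⊤ := by finiteness
  have hsplit : a0 + a1 = ((4 * P.k : ℕ) + 4 : ℝ≥0∞) * w := by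
    have h1 : μ (P.A ∩ cylinder η) = a0 + a1 := meas_inter_cyl_split μ hA η
    rw [Set.inter_eq_left.2 hsub] at h1
    rw [← h1, hm]
    have h4w : (4 : ℝ≥0∞) * w = ((4 : ℝ≥0∞) ^ (n + 1))⁻¹ := by
      rw [hw, pow_succ _ (n+1),
        ENNReal.mul_inv (Or.inl (pow_ne_zero _ (by norm_num)))
          (Or.inl (ENNReal.pow_ne_top (by norm_num))),
        mul_comm ((4:ℝ≥0∞)^(n+1))⁻¹, ← mul_assoc,
        ENNReal.mul_inv_cancel (by norm_num) (by norm_num), one_mul]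
    rw [← h4w]
    push_cast
    ring
  -- floor facts
  have hqt : a0 / w ≠ ⊤ := (ENNReal.div_lt_top ha0t hw0).ne
  have hq : ((a0 / w).toNNReal : ℝ≥0∞) = a0 / w := ENNReal.coe_toNNReal hqt
  have hm0 : ndm0 μ η P = ⌊(a0 / w).toNNReal⌋₊ := rfl
  have hdm : a0 / w * w = a0 := ENNReal.div_mul_cancel hw0 hwt
  have hm0w : ((ndm0 μ η P : ℝ≥0∞)) * w ≤ a0 := by
    rw [← hdm]
    apply mul_le_mul_left _ w
    rw [← hq, hm0]
    exact_mod_cast ENNReal.coe_le_coe.2 (Nat.floor_le zero_le)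
  have ha0lt : a0 < ((ndm0 μ η P : ℝ≥0∞) + 1) * w := by
    rw [← hdm]
    apply (ENNReal.mul_lt_mul_iff_left hw0 hwt).2
    rw [← hq, hm0]
    exact_mod_cast ENNReal.coe_lt_coe.2 (Nat.lt_floor_add_one _)
  have hk0le : ndk0 μ η P ≤ 4 * P.k := min_le_left _ _
  rcases Bool.eq_false_or_eq_true b with hb | hb
  all_goals subst hb
  -- b = true case first? order of rcases: b = true | b = false? eq_false_or_eq_true gives (b = true) ∨ (b = false)
  · -- b = true : kb = 4k - k0
    have hkb_eq : ndkb μ η P true = 4 * P.k - ndk0 μ η P := by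
      simp [ndkb, hk]
    by_contra hcon
    push_neg at hcon
    -- a1 < (kb+1) w
    have hk0lt : ndk0 μ η P < 4 * P.k := by
      rw [hkb_eq] at hkb; omega
    have hk0m : ndk0 μ η P = ndm0 μ η P - 1 := by
      have := min_eq_right (le_of_lt (lt_of_le_of_lt (le_refl _) hk0lt))
      -- careful: need min (4k) (m0-1) with m0-1 ≤ 4k
      rcases le_or_gt (ndm0 μ η P - 1) (4 * P.k) with h | h
      · exact min_eq_right h
      · exfalso; rw [ndk0, min_eq_left h.le] at hk0lt; omega
    -- turn the strict bounds into ℕ inequality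
    have hlt : ((4 * P.k : ℕ) + 4 : ℝ≥0∞) * w
        < (((ndm0 μ η P : ℝ≥0∞) + 1) + ((ndkb μ η P true : ℝ≥0∞) + 1)) * w := by
      rw [← hsplit, add_mul]
      exact ENNReal.add_lt_add ha0lt hcon
    have hltn : (4 * P.k + 4 : ℕ) < (ndm0 μ η P + 1) + (ndkb μ η P true + 1) := by
      have := (ENNReal.mul_lt_mul_iff_left hw0 hwt).1 hlt
      exact_mod_cast this
    rw [hkb_eq] at hltn
    omega
  · -- b = false : kb = k0
    have hkb_eq : ndkb μ η P false = ndk0 μ η P := by simp [ndkb, hk]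
    rw [hkb_eq] at hkb ⊢
    have h1 : ndk0 μ η P + 1 ≤ ndm0 μ η P := by
      have : ndk0 μ η P ≤ ndm0 μ η P - 1 := min_le_right _ _
      omega
    calc ((ndk0 μ η P : ℝ≥0∞) + 1) * w ≤ (ndm0 μ η P : ℝ≥0∞) * w := by
          apply mul_le_mul_left _ w
          exact_mod_cast Nat.cast_le.2 h1
    _ ≤ a0 := hm0w

end Main


/-! ### Part 4: invariants and the limit measure computation -/

section Inv

variable {μ : Measure (ℕ → Bool)} {U : Set (ℕ → Bool)} [IsProbabilityMeasure μ]

theorem node_inv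
    (hμ : ∀ η : List Bool, μ (cylinder η) = ((2 : ℝ≥0∞) ^ η.length)⁻¹)
    (hUm : MeasurableSet U) (hU34 : 3 * ((4 : ℝ≥0∞) ^ (1 : ℕ))⁻¹ ≤ μ Uᶜ)
    (η : List Bool) :
    MeasurableSet (node μ U η).A ∧
    (node μ U η).A ⊆ cylinder η ∧
    (node μ U η).A ∩ U = ∅ ∧
    ((node μ U η).k = 0 → (node μ U η).A = ∅) ∧
    ((node μ U η).k ≠ 0 →
      μ (node μ U η).A = ((node μ U η).k + 1) * ((4 : ℝ≥0∞) ^ (η.length + 1))⁻¹) := by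
  induction η using List.reverseRecOn with
  | nil =>
    rw [node_nil]
    refine ⟨(hUm.compl).diff (measurableSet_lexTail _), ?_, ?_, ?_, ?_⟩
    · rw [cylinder_nil]; exact Set.subset_univ _
    · apply Set.eq_empty_of_subset_empty
      rintro x ⟨⟨h1, -⟩, h2⟩
      exact h1 h2
    · intro h; exact absurd h (by norm_num [root])
    · intro _
      show μ (Uᶜ \ lexTail _) = _
      rw [lexCut_spec μ hμ hUm.compl hU34]
      show (3 : ℝ≥0∞) * _ = ((root μ U).k + 1 : ℝ≥0∞) * _
      norm_num [root]
  | append_singleton η b ih =>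
    obtain ⟨ihm, ihsub, ihU, ihz, ihmeas⟩ := ih
    rw [node_concat]
    by_cases hkb : ndkb μ η (node μ U η) b = 0
    · rw [step_pruned η _ b hkb]
      exact ⟨MeasurableSet.empty, Set.empty_subset _, by simp, fun _ => rfl,
        fun h => absurd rfl h⟩
    · have hkP : (node μ U η).k ≠ 0 := fun h => hkb (ndkb_of_parent_zero η _ b h)
      have hm := ihmeas hkP
      have hfeas := ndkb_cut_le ihm ihsub hm hkP b hkb
      have hSm : MeasurableSet ((node μ U η).A ∩ cylinder (η ++ [b])) :=
        ihm.inter (measurableSet_cylinder _)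
      have hcut := lexCut_spec μ hμ hSm hfeas
      rw [step, if_neg hkb]
      refine ⟨hSm.diff (measurableSet_lexTail _), ?_, ?_, ?_, ?_⟩
      · exact Set.diff_subset.trans Set.inter_subset_right
      · apply Set.eq_empty_of_subset_empty
        intro x hx
        rw [← ihU]
        exact ⟨hx.1.1.1, hx.2⟩
      · intro h; exact absurd h hkb
      · intro _
        show μ _ = ((ndkb μ η (node μ U η) b : ℝ≥0∞) + 1) * _
        rw [hcut, List.length_append]
        norm_num

/-! derived structural lemmas -/

lemma node_k_concat (η : List Bool) (b : Bool) :
    (node μ U (η ++ [b])).k = ndkb μ η (node μ U η) b := by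
  rw [node_concat, step_k]

lemma node_rel (η : List Bool) (b : Bool) :
    (node μ U (η ++ [b])).A
      = ((node μ U η).A ∩ cylinder (η ++ [b])) \ (node μ U (η ++ [b])).com := by
  rw [node_concat, step_rel]

lemma node_A_sub_parent (η : List Bool) (b : Bool) :
    (node μ U (η ++ [b])).A ⊆ (node μ U η).A := by
  rw [node_concat]
  exact (step_A_subset η _ b).trans Set.inter_subset_left

lemma node_com_subset {η : List Bool} (hne : η ≠ []) : (node μ U η).com ⊆ cylinder η := by
  rcases List.eq_nil_or_concat η with h | ⟨η', b, h⟩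
  · exact absurd h hne
  · rw [List.concat_eq_append] at h
    subst h
    rw [node_concat]
    exact step_com_subset η' _ b

lemma node_A_disj_com (η : List Bool) : (node μ U η).A ∩ (node μ U η).com = ∅ := by
  rcases List.eq_nil_or_concat η with h | ⟨η', b, h⟩
  · subst h
    rw [node_nil]
    apply Set.eq_empty_of_subset_empty
    rintro x ⟨⟨-, h1⟩, h2⟩
    exact h1 h2
  · rw [List.concat_eq_append] at h
    subst h
    rw [node_rel]
    apply Set.eq_empty_of_subset_empty
    rintro x ⟨⟨-, h1⟩, h2⟩
    exact h1 h2

lemma node_pruned_com {η : List Bool} (hne : η ≠ []) (h : (node μ U η).k = 0) :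
    (node μ U η).com = cylinder η := by
  rcases List.eq_nil_or_concat η with h' | ⟨η', b, h'⟩
  · exact absurd h' hne
  · rw [List.concat_eq_append] at h'
    subst h'
    rw [node_k_concat] at h
    rw [node_concat, step_pruned η' _ b h]

lemma node_k_zero_concat (η : List Bool) (b : Bool) (h : (node μ U η).k = 0) :
    (node μ U (η ++ [b])).k = 0 := by
  rw [node_k_concat]
  exact ndkb_of_parent_zero η _ b h

lemma node_ksum (η : List Bool) (h : (node μ U η).k ≠ 0) :
    (node μ U (η ++ [false])).k + (node μ U (η ++ [true])).k = 4 * (node μ U η).k := by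
  rw [node_k_concat, node_k_concat]
  exact ndkb_sum η _ h

lemma measurableSet_node_com (hUm : MeasurableSet U) (η : List Bool) :
    MeasurableSet (node μ U η).com := by
  rcases List.eq_nil_or_concat η with h | ⟨η', b, h⟩
  · subst h
    exact measurableSet_lexTail _
  · rw [List.concat_eq_append] at h
    subst h
    rw [node_concat]
    exact measurableSet_step_com η' _ b

/-! the `D` sets -/

def DD (μ : Measure (ℕ → Bool)) (U : Set (ℕ → Bool)) : ℕ → List Bool → Set (ℕ → Bool)
  | 0, η => (node μ U η).A
  | j+1, η => DD μ U j (η ++ [false]) ∪ DD μ U j (η ++ [true])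

lemma measurableSet_DD
    (hμ : ∀ η : List Bool, μ (cylinder η) = ((2 : ℝ≥0∞) ^ η.length)⁻¹)
    (hUm : MeasurableSet U) (hU34 : 3 * ((4 : ℝ≥0∞) ^ (1 : ℕ))⁻¹ ≤ μ Uᶜ) :
    ∀ j η, MeasurableSet (DD μ U j η)
  | 0, η => (node_inv hμ hUm hU34 η).1
  | j+1, η => (measurableSet_DD hμ hUm hU34 j _).union (measurableSet_DD hμ hUm hU34 j _)

lemma DD_subset_cyl
    (hμ : ∀ η : List Bool, μ (cylinder η) = ((2 : ℝ≥0∞) ^ η.length)⁻¹)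
    (hUm : MeasurableSet U) (hU34 : 3 * ((4 : ℝ≥0∞) ^ (1 : ℕ))⁻¹ ≤ μ Uᶜ) :
    ∀ j η, DD μ U j η ⊆ cylinder η
  | 0, η => (node_inv hμ hUm hU34 η).2.1
  | j+1, η => by
    apply Set.union_subset
    · exact (DD_subset_cyl hμ hUm hU34 j _).trans (cylinder_mono (List.prefix_append _ _))
    · exact (DD_subset_cyl hμ hUm hU34 j _).trans (cylinder_mono (List.prefix_append _ _))

lemma DD_succ_subset : ∀ j η, DD μ U (j+1) η ⊆ DD μ U j η
  | 0, η => by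
    apply Set.union_subset
    · exact node_A_sub_parent η false
    · exact node_A_sub_parent η true
  | j+1, η => by
    apply Set.union_subset
    · exact (DD_succ_subset j _).trans Set.subset_union_left
    · exact (DD_succ_subset j _).trans Set.subset_union_right

lemma DD_antitone (η : List Bool) : Antitone fun j => DD μ U j η :=
  antitone_nat_of_succ_le fun j => DD_succ_subset j η

/-! measure bounds for the `D` sets -/

lemma DD_meas_bounds
    (hμ : ∀ η : List Bool, μ (cylinder η) = ((2 : ℝ≥0∞) ^ η.length)⁻¹)
    (hUm : MeasurableSet U) (hU34 : 3 * ((4 : ℝ≥0∞) ^ (1 : ℕ))⁻¹ ≤ μ Uᶜ) :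
    ∀ j η, ((node μ U η).k : ℝ≥0∞) * ((4 : ℝ≥0∞) ^ (η.length + 1))⁻¹ ≤ μ (DD μ U j η) ∧
      μ (DD μ U j η) ≤ ((node μ U η).k : ℝ≥0∞) * ((4 : ℝ≥0∞) ^ (η.length + 1))⁻¹
        + 2 ^ j * ((4 : ℝ≥0∞) ^ (η.length + j + 1))⁻¹
  | 0, η => by
    by_cases hk : (node μ U η).k = 0
    · have hA : (node μ U η).A = ∅ := (node_inv hμ hUm hU34 η).2.2.2.1 hk
      show _ ≤ μ (node μ U η).A ∧ μ (node μ U η).A ≤ _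
      rw [hA, hk]
      simp
    · have hm := (node_inv hμ hUm hU34 η).2.2.2.2 hk
      show _ ≤ μ (node μ U η).A ∧ μ (node μ U η).A ≤ _
      rw [hm]
      constructor
      · exact mul_le_mul_left (by simp) _
      · rw [add_mul, one_mul, pow_zero, one_mul]
  | j+1, η => by
    have h0 := DD_meas_bounds hμ hUm hU34 j (η ++ [false])
    have h1 := DD_meas_bounds hμ hUm hU34 j (η ++ [true])
    have hdisj : Disjoint (DD μ U j (η ++ [false])) (DD μ U j (η ++ [true])) := by
      rw [Set.disjoint_iff_inter_eq_empty]
      apply Set.eq_empty_of_subset_empty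
      intro x hx
      rw [← cylinder_append_disjoint η]
      exact ⟨DD_subset_cyl hμ hUm hU34 j _ hx.1, DD_subset_cyl hμ hUm hU34 j _ hx.2⟩
    have hadd : μ (DD μ U (j+1) η)
        = μ (DD μ U j (η ++ [false])) + μ (DD μ U j (η ++ [true])) := by
      show μ (_ ∪ _) = _
      exact measure_union hdisj (measurableSet_DD hμ hUm hU34 j _)
    rw [hadd]
    have hlen : (η ++ [false]).length = η.length + 1 := by simp
    have hlen' : (η ++ [true]).length = η.length + 1 := by simp
    by_cases hk : (node μ U η).k = 0
    · have hz0 : (node μ U (η ++ [false])).k = 0 := node_k_zero_concat η false hk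
      have hz1 : (node μ U (η ++ [true])).k = 0 := node_k_zero_concat η true hk
      constructor
      · rw [hk]; simp
      · calc μ (DD μ U j (η ++ [false])) + μ (DD μ U j (η ++ [true]))
            ≤ (0 + 2 ^ j * ((4 : ℝ≥0∞) ^ ((η++[false]).length + j + 1))⁻¹)
              + (0 + 2 ^ j * ((4 : ℝ≥0∞) ^ ((η++[true]).length + j + 1))⁻¹) := by
              apply add_le_add
              · have := h0.2; rwa [hz0, Nat.cast_zero, zero_mul] at this
              · have := h1.2; rwa [hz1, Nat.cast_zero, zero_mul] at this
        _ ≤ ((node μ U η).k : ℝ≥0∞) * ((4 : ℝ≥0∞) ^ (η.length + 1))⁻¹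
              + 2 ^ (j+1) * ((4 : ℝ≥0∞) ^ (η.length + (j+1) + 1))⁻¹ := by
              rw [hlen, hlen', zero_add]
              rw [show η.length + 1 + j + 1 = η.length + (j+1) + 1 by omega]
              rw [show (2:ℝ≥0∞) ^ (j+1) = 2 ^ j + 2 ^ j by rw [pow_succ]; ring]
              rw [add_mul]
              exact le_add_of_nonneg_left zero_le
    · have hsum : ((node μ U (η ++ [false])).k : ℝ≥0∞) + ((node μ U (η ++ [true])).k : ℝ≥0∞)
          = 4 * (node μ U η).k := by
        rw [← Nat.cast_add, node_ksum η hk]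
        push_cast
        ring
      have h4w : (4:ℝ≥0∞) * ((4:ℝ≥0∞)^(η.length+2))⁻¹ = ((4:ℝ≥0∞)^(η.length+1))⁻¹ := by
        rw [pow_succ _ (η.length+1),
          ENNReal.mul_inv (Or.inl (pow_ne_zero _ (by norm_num)))
            (Or.inl (ENNReal.pow_ne_top (by norm_num))),
          mul_comm ((4:ℝ≥0∞)^(η.length+1))⁻¹, ← mul_assoc,
          ENNReal.mul_inv_cancel (by norm_num) (by norm_num), one_mul]
      constructor
      · calc ((node μ U η).k : ℝ≥0∞) * ((4 : ℝ≥0∞) ^ (η.length + 1))⁻¹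
            = (((node μ U (η ++ [false])).k : ℝ≥0∞) + ((node μ U (η ++ [true])).k : ℝ≥0∞))
              * ((4 : ℝ≥0∞) ^ (η.length + 2))⁻¹ := by
              rw [hsum, ← h4w]; ring
        _ = ((node μ U (η ++ [false])).k : ℝ≥0∞) * ((4 : ℝ≥0∞) ^ ((η++[false]).length + 1))⁻¹
              + ((node μ U (η ++ [true])).k : ℝ≥0∞) * ((4 : ℝ≥0∞) ^ ((η++[true]).length + 1))⁻¹ := by
              rw [hlen, hlen', add_mul]
        _ ≤ _ := add_le_add h0.1 h1.1
      · calc μ (DD μ U j (η ++ [false])) + μ (DD μ U j (η ++ [true]))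
            ≤ (((node μ U (η ++ [false])).k : ℝ≥0∞) * ((4 : ℝ≥0∞) ^ ((η++[false]).length + 1))⁻¹
                + 2 ^ j * ((4 : ℝ≥0∞) ^ ((η++[false]).length + j + 1))⁻¹)
              + (((node μ U (η ++ [true])).k : ℝ≥0∞) * ((4 : ℝ≥0∞) ^ ((η++[true]).length + 1))⁻¹
                + 2 ^ j * ((4 : ℝ≥0∞) ^ ((η++[true]).length + j + 1))⁻¹) :=
              add_le_add h0.2 h1.2
        _ = ((node μ U η).k : ℝ≥0∞) * ((4 : ℝ≥0∞) ^ (η.length + 1))⁻¹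
              + 2 ^ (j+1) * ((4 : ℝ≥0∞) ^ (η.length + (j+1) + 1))⁻¹ := by
              rw [hlen, hlen']
              rw [show η.length + 1 + j + 1 = η.length + (j+1) + 1 by omega]
              rw [show ((node μ U η).k : ℝ≥0∞) * ((4 : ℝ≥0∞) ^ (η.length + 1))⁻¹
                  = (((node μ U (η ++ [false])).k : ℝ≥0∞) + ((node μ U (η ++ [true])).k : ℝ≥0∞))
                    * ((4 : ℝ≥0∞) ^ (η.length + 2))⁻¹ by rw [hsum, ← h4w]; ring]
              rw [show (2:ℝ≥0∞) ^ (j+1) = 2 ^ j + 2 ^ j by rw [pow_succ]; ring]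
              ring

end Inv


/-! ### Part 5: the global set and the limit computation -/

def Rem (μ : Measure (ℕ → Bool)) (U : Set (ℕ → Bool)) : Set (ℕ → Bool) :=
  U ∪ ⋃ η : List Bool, (node μ U η).com

def CC (μ : Measure (ℕ → Bool)) (U : Set (ℕ → Bool)) : Set (ℕ → Bool) := (Rem μ U)ᶜ

section Limit

variable {μ : Measure (ℕ → Bool)} {U : Set (ℕ → Bool)} [IsProbabilityMeasure μ]
variable (hμ : ∀ η : List Bool, μ (cylinder η) = ((2 : ℝ≥0∞) ^ η.length)⁻¹)
variable (hUm : MeasurableSet U) (hU34 : 3 * ((4 : ℝ≥0∞) ^ (1 : ℕ))⁻¹ ≤ μ Uᶜ)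

include hUm in
lemma measurableSet_CC : MeasurableSet (CC μ U) := by
  apply MeasurableSet.compl
  exact hUm.union (MeasurableSet.iUnion fun η => measurableSet_node_com hUm η)

lemma CC_not_mem_com {x : ℕ → Bool} (hx : x ∈ CC μ U) (η : List Bool) :
    x ∉ (node μ U η).com := fun h =>
  hx (Or.inr (Set.mem_iUnion.2 ⟨η, h⟩))

lemma CC_not_mem_U {x : ℕ → Bool} (hx : x ∈ CC μ U) : x ∉ U := fun h => hx (Or.inl h)

lemma CC_inter_cyl_sub_A : ∀ η : List Bool, CC μ U ∩ cylinder η ⊆ (node μ U η).A := by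
  intro η
  induction η using List.reverseRecOn with
  | nil =>
    rintro x ⟨hx, -⟩
    rw [node_nil]
    exact ⟨fun h => CC_not_mem_U hx h, fun h => CC_not_mem_com hx [] h⟩
  | append_singleton η b ih =>
    rintro x ⟨hx, hcyl⟩
    rw [node_rel]
    refine ⟨⟨ih ⟨hx, cylinder_mono (List.prefix_append _ _) hcyl⟩, hcyl⟩, ?_⟩
    exact CC_not_mem_com hx (η ++ [b])

lemma CC_inter_cyl_sub_DD : ∀ (j : ℕ) (η : List Bool), CC μ U ∩ cylinder η ⊆ DD μ U j η
  | 0, η => CC_inter_cyl_sub_A η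
  | j+1, η => by
    intro x hx
    have := hx.2
    rw [cylinder_split η] at this
    rcases this with h | h
    · exact Set.subset_union_left (CC_inter_cyl_sub_DD j (η ++ [false]) ⟨hx.1, h⟩)
    · exact Set.subset_union_right (CC_inter_cyl_sub_DD j (η ++ [true]) ⟨hx.1, h⟩)

lemma DD_mem_A : ∀ (j : ℕ) (η : List Bool) (x : ℕ → Bool), x ∈ DD μ U j η →
    ∃ ν : List Bool, ν.length = η.length + j ∧ x ∈ (node μ U ν).A
  | 0, η, x, hx => ⟨η, by omega, hx⟩
  | j+1, η, x, hx => by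
    rcases hx with h | h
    · obtain ⟨ν, hl, hν⟩ := DD_mem_A j _ x h
      exact ⟨ν, by simp at hl; omega, hν⟩
    · obtain ⟨ν, hl, hν⟩ := DD_mem_A j _ x h
      exact ⟨ν, by simp at hl; omega, hν⟩

lemma A_chain_step (x : ℕ → Bool) (m : ℕ)
    (h : x ∈ (node μ U (pre x (m+1))).A) : x ∈ (node μ U (pre x m)).A := by
  rw [pre_succ] at h
  exact node_A_sub_parent (pre x m) (x m) h

lemma A_chain (x : ℕ → Bool) {m M : ℕ} (hm : m ≤ M)
    (h : x ∈ (node μ U (pre x M)).A) : x ∈ (node μ U (pre x m)).A := by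
  induction M with
  | zero => have : m = 0 := by omega
            subst this; exact h
  | succ M ih =>
    rcases Nat.lt_or_ge m (M+1) with h' | h'
    · exact ih (by omega) (A_chain_step x M h)
    · have : m = M + 1 := by omega
      subst this; exact h

include hμ hUm hU34 in
lemma iInter_DD_sub (η : List Bool) :
    (⋂ j, DD μ U j η) ⊆ CC μ U ∩ cylinder η := by
  intro x hx
  rw [Set.mem_iInter] at hx
  have hA0 : x ∈ (node μ U η).A := hx 0
  have hcyl : x ∈ cylinder η := (node_inv hμ hUm hU34 η).2.1 hA0
  have hη : η = pre x η.length := eq_pre_of_mem hcyl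
  -- x belongs to A along all its prefixes
  have hAall : ∀ m, x ∈ (node μ U (pre x m)).A := by
    intro m
    rcases le_or_gt m η.length with h | h
    · exact A_chain x h (hη ▸ hA0)
    · obtain ⟨ν, hl, hν⟩ := DD_mem_A (m - η.length) η x (hx (m - η.length))
      have hν' : ν = pre x m := by
        have := eq_pre_of_mem ((node_inv hμ hUm hU34 ν).2.1 hν)
        rw [hl] at this
        rw [this]
        congr 1
        omega
      rwa [hν'] at hν
  refine ⟨?_, hcyl⟩
  intro hmem
  rcases hmem with h | h
  · -- x ∈ U
    have := (node_inv hμ hUm hU34 []).2.2.1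
    have hx0 : x ∈ (node μ U []).A := by
      have := hAall 0
      simpa using this
    exact absurd (Set.mem_inter hx0 h) (by rw [this]; exact fun h => h)
  · obtain ⟨ν, hν⟩ := Set.mem_iUnion.1 h
    by_cases hne : ν = []
    · subst hne
      have hx0 : x ∈ (node μ U []).A := by simpa using hAall 0
      have := node_A_disj_com (μ := μ) (U := U) []
      exact absurd (Set.mem_inter hx0 hν) (by rw [this]; exact fun h => h)
    · have hcylν : x ∈ cylinder ν := node_com_subset hne hν
      have hνp : ν = pre x ν.length := eq_pre_of_mem hcylν
      have hxν : x ∈ (node μ U ν).A := by rw [hνp]; exact hAall ν.length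
      have := node_A_disj_com (μ := μ) (U := U) ν
      exact absurd (Set.mem_inter hxν hν) (by rw [this]; exact fun h => h)

include hμ hUm hU34 in
lemma CC_inter_cyl_eq (η : List Bool) :
    CC μ U ∩ cylinder η = ⋂ j, DD μ U j η := by
  apply Set.Subset.antisymm
  · exact Set.subset_iInter fun j => CC_inter_cyl_sub_DD j η
  · exact iInter_DD_sub hμ hUm hU34 η

include hμ hUm hU34 in
/-- the central measure computation -/
lemma CC_inter_cyl_measure (η : List Bool) :
    μ (CC μ U ∩ cylinder η)
      = ((node μ U η).k : ℝ≥0∞) * ((4 : ℝ≥0∞) ^ (η.length + 1))⁻¹ := by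
  rw [CC_inter_cyl_eq hμ hUm hU34 η]
  have hmono : Antitone fun j => DD μ U j η := DD_antitone η
  have hiInf : μ (⋂ j, DD μ U j η) = ⨅ j, μ (DD μ U j η) :=
    hmono.measure_iInter (fun j => (measurableSet_DD hμ hUm hU34 j η).nullMeasurableSet)
      ⟨0, by finiteness⟩
  rw [hiInf]
  apply le_antisymm
  · apply ENNReal.le_of_forall_pos_le_add
    intro ε hε _
    obtain ⟨j, hj⟩ := ENNReal.exists_inv_two_pow_lt (ENNReal.coe_ne_zero.2 hε.ne')
    have hb := (DD_meas_bounds hμ hUm hU34 j η).2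
    have hsmall : (2 : ℝ≥0∞) ^ j * ((4 : ℝ≥0∞) ^ (η.length + j + 1))⁻¹ ≤ 2⁻¹ ^ j := by
      have h1 : ((4 : ℝ≥0∞) ^ (η.length + j + 1))⁻¹ ≤ ((4 : ℝ≥0∞) ^ j)⁻¹ :=
        ENNReal.inv_le_inv' (pow_le_pow_right₀ (by norm_num) (by omega))
      calc (2 : ℝ≥0∞) ^ j * ((4 : ℝ≥0∞) ^ (η.length + j + 1))⁻¹
            ≤ (2 : ℝ≥0∞) ^ j * ((4 : ℝ≥0∞) ^ j)⁻¹ := mul_le_mul_right h1 _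
        _ = 2⁻¹ ^ j := by
            rw [show (4 : ℝ≥0∞) = 2 * 2 by norm_num, mul_pow,
              ENNReal.mul_inv (Or.inl (pow_ne_zero _ (by norm_num)))
                (Or.inl (ENNReal.pow_ne_top (by norm_num))),
              ← mul_assoc, ENNReal.mul_inv_cancel (pow_ne_zero _ (by norm_num))
                (ENNReal.pow_ne_top (by norm_num)), one_mul, ENNReal.inv_pow]
    calc ⨅ j, μ (DD μ U j η) ≤ μ (DD μ U j η) := iInf_le _ j
    _ ≤ ((node μ U η).k : ℝ≥0∞) * ((4 : ℝ≥0∞) ^ (η.length + 1))⁻¹ + 2⁻¹ ^ j :=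
        le_trans hb (add_le_add_right hsmall _)
    _ ≤ ((node μ U η).k : ℝ≥0∞) * ((4 : ℝ≥0∞) ^ (η.length + 1))⁻¹ + ε :=
        add_le_add_right hj.le _
  · exact le_iInf fun j => (DD_meas_bounds hμ hUm hU34 j η).1

end Limit


/-! ### Part 6: limTree identification -/

lemma isOpen_exists_cyl {V : Set (ℕ → Bool)} (hV : IsOpen V) {x : ℕ → Bool} (hx : x ∈ V) :
    ∃ n, cylinder (pre x n) ⊆ V := by
  rw [isOpen_pi_iff] at hV
  obtain ⟨I, u, h1, h2⟩ := hV x hx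
  refine ⟨(I.sup id) + 1, fun y hy => h2 ?_⟩
  intro i hi
  have : y i = x i :=
    mem_cylinder_pre_iff.1 hy i (Nat.lt_succ_of_le (Finset.le_sup (f := id) hi))
  rw [this]; exact (h1 i hi).2

def TT (μ : Measure (ℕ → Bool)) (U : Set (ℕ → Bool)) : Set (List Bool) :=
  {η | (node μ U η).k ≠ 0}

section Final

variable {μ : Measure (ℕ → Bool)} {U : Set (ℕ → Bool)} [IsProbabilityMeasure μ]
variable (hμ : ∀ η : List Bool, μ (cylinder η) = ((2 : ℝ≥0∞) ^ η.length)⁻¹)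
variable (hUo : IsOpen U) (hUm : MeasurableSet U)
variable (hU34 : 3 * ((4 : ℝ≥0∞) ^ (1 : ℕ))⁻¹ ≤ μ Uᶜ)

lemma node_k_zero_append (t : List Bool) (u : List Bool) (h : (node μ U t).k = 0) :
    (node μ U (t ++ u)).k = 0 := by
  induction u using List.reverseRecOn with
  | nil => simpa using h
  | append_singleton u b ih =>
    rw [← List.append_assoc]
    exact node_k_zero_concat (t ++ u) b ih

include hμ hUo hUm hU34 in
lemma limTree_eq : limTree (TT μ U) = CC μ U := by
  apply Set.Subset.antisymm
  · intro x hx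
    by_contra hc
    have hx' : x ∈ Rem μ U := not_not.1 hc
    obtain ⟨m, hm⟩ : ∃ m, cylinder (pre x m) ⊆ Rem μ U := by
      rcases hx' with h | h
      · obtain ⟨n, hn⟩ := isOpen_exists_cyl hUo h
        exact ⟨n, hn.trans Set.subset_union_left⟩
      · obtain ⟨ν, hν⟩ := Set.mem_iUnion.1 h
        have hsub : (node μ U ν).com ⊆ Rem μ U :=
          fun y hy => Or.inr (Set.mem_iUnion.2 ⟨ν, hy⟩)
        rcases List.eq_nil_or_concat ν with hnil | ⟨η', b, hcat⟩
        · subst hnil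
          obtain ⟨m, hm⟩ := exists_cyl_subset_lexTail
            (show x ∈ lexTail _ from hν)
          exact ⟨m, hm.trans hsub⟩
        · rw [List.concat_eq_append] at hcat
          subst hcat
          by_cases hkb : ndkb μ η' (node μ U η') b = 0
          · have hcom : (node μ U (η' ++ [b])).com = cylinder (η' ++ [b]) := by
              rw [node_concat, step_pruned η' _ b hkb]
            rw [hcom] at hν
            refine ⟨(η' ++ [b]).length, ?_⟩
            rw [← eq_pre_of_mem hν, ← hcom]
            exact hsub
          · have hcom : (node μ U (η' ++ [b])).com
                = cylinder (η' ++ [b]) ∩ lexTail (lexCut μ ((node μ U η').A ∩ cylinder (η' ++ [b]))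
                    ((ndkb μ η' (node μ U η') b + 1) * ((4 : ℝ≥0∞) ^ (η'.length + 2))⁻¹)) := by
              rw [node_concat, step, if_neg hkb]
            rw [hcom] at hν
            obtain ⟨m0, hm0⟩ := exists_cyl_subset_lexTail hν.2
            have hcylν : x ∈ cylinder (η' ++ [b]) := hν.1
            refine ⟨max m0 (η' ++ [b]).length, ?_⟩
            intro y hy
            apply hsub
            rw [hcom]
            constructor
            · have h1 : cylinder (pre x (max m0 (η' ++ [b]).length))
                  ⊆ cylinder (pre x (η' ++ [b]).length) :=
                cylinder_mono (pre_prefix x (le_max_right _ _))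
              have := h1 hy
              rwa [← eq_pre_of_mem hcylν] at this
            · exact hm0 (cylinder_mono (pre_prefix x (le_max_left _ _)) hy)
    have hTm : pre x m ∈ TT μ U := hx m
    have h0 : CC μ U ∩ cylinder (pre x m) = ∅ := by
      apply Set.eq_empty_of_subset_empty
      rintro y ⟨hy1, hy2⟩
      exact absurd (hm hy2) hy1
    have := CC_inter_cyl_measure hμ hUm hU34 (pre x m)
    rw [h0] at this
    have hne : ((node μ U (pre x m)).k : ℝ≥0∞) * ((4 : ℝ≥0∞) ^ ((pre x m).length + 1))⁻¹ ≠ 0 := by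
      apply mul_ne_zero
      · exact Nat.cast_ne_zero.2 hTm
      · exact ENNReal.inv_ne_zero.2 (ENNReal.pow_ne_top (by norm_num))
    exact hne (by rw [← this, measure_empty])
  · intro x hx n
    show (node μ U (pre x n)).k ≠ 0
    intro hk
    have hn0 : n ≠ 0 := by
      intro h
      subst h
      have : (node μ U (pre x 0)).k = 2 := rfl
      rw [this] at hk
      exact absurd hk (by norm_num)
    have hne : pre x n ≠ [] := by
      intro h
      apply hn0
      have := pre_length x n
      rw [h] at this
      simpa using this.symm
    have hcom := node_pruned_com hne hk
    apply CC_not_mem_com hx (pre x n)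
    rw [hcom]
    exact mem_pre_cylinder x n

end Final

end
end S4

/-- Let `μ` be the fair-coin product measure on Cantor space (characterized by its
values `2^{-|η|}` on the basic clopen sets `[η]`), and let `A` be Borel with
`μ(A) < 1/1000`. Then there is a tree `T ⊆ 2^{<ω}` with `lim(T) ∩ A = ∅`,
`μ(lim(T)) = 1/2`, and for every `η ∈ T`, `μ(lim(T) ∩ [η]) = k · 4^{-(|η|+1)}`
for some integer `1 ≤ k ≤ 4^{|η|+1}`. -/
theorem stmt4 (μ : Measure (ℕ → Bool)) [IsProbabilityMeasure μ]
    (hμ : ∀ η : List Bool, μ (cylinder η) = ((2 : ℝ≥0∞) ^ η.length)⁻¹)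
    (A : Set (ℕ → Bool)) (hA : MeasurableSet A) (hAsmall : μ A < 1 / 1000) :
    ∃ T : Set (List Bool),
      (∀ s ∈ T, ∀ t : List Bool, t <+: s → t ∈ T) ∧
      limTree T ∩ A = ∅ ∧
      μ (limTree T) = 1 / 2 ∧
      ∀ η ∈ T, ∃ k : ℕ, 1 ≤ k ∧ k ≤ 4 ^ (η.length + 1) ∧
        μ (limTree T ∩ cylinder η) = k * ((4 : ℝ≥0∞) ^ (η.length + 1))⁻¹ := by
  classical
  obtain ⟨U, hAU, hUo, hUsmall⟩ := A.exists_isOpen_lt_of_lt (1/1000) hAsmall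
  have hUm : MeasurableSet U := hUo.measurableSet
  have hU14 : μ U ≤ (4 : ℝ≥0∞)⁻¹ := by
    apply le_trans hUsmall.le
    rw [one_div]
    exact ENNReal.inv_le_inv' (by norm_num)
  have hU34 : 3 * ((4 : ℝ≥0∞) ^ (1 : ℕ))⁻¹ ≤ μ Uᶜ := by
    rw [prob_compl_eq_one_sub hUm, pow_one]
    have key : (3 : ℝ≥0∞) * 4⁻¹ = 1 - 4⁻¹ := by
      apply ENNReal.eq_sub_of_add_eq (ENNReal.inv_ne_top.2 (by norm_num))
      have h : (3 : ℝ≥0∞) * 4⁻¹ + 4⁻¹ = 4 * 4⁻¹ := by ring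
      rw [h, ENNReal.mul_inv_cancel (by norm_num) (by norm_num)]
    rw [key]
    exact tsub_le_tsub_left hU14 1
  refine ⟨S4.TT μ U, ?_, ?_, ?_, ?_⟩
  · intro s hs t hts
    by_contra h0
    obtain ⟨u, hu⟩ := hts
    have hz : (S4.node μ U t).k = 0 := not_not.1 h0
    have := S4.node_k_zero_append t u hz
    rw [hu] at this
    exact hs this
  · rw [S4.limTree_eq hμ hUo hUm hU34]
    apply Set.eq_empty_of_subset_empty
    rintro x ⟨hC, hxA⟩
    exact absurd (hAU hxA) (S4.CC_not_mem_U hC)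
  · rw [S4.limTree_eq hμ hUo hUm hU34]
    have h1 : S4.CC μ U = S4.CC μ U ∩ cylinder [] := by
      rw [S4.cylinder_nil, Set.inter_univ]
    rw [h1, S4.CC_inter_cyl_measure hμ hUm hU34]
    show ((S4.node μ U []).k : ℝ≥0∞) * ((4 : ℝ≥0∞) ^ (List.length ([] : List Bool) + 1))⁻¹ = 1/2
    have h2 : (S4.node μ U []).k = 2 := rfl
    rw [h2]
    show ((2:ℕ) : ℝ≥0∞) * ((4 : ℝ≥0∞) ^ (0 + 1))⁻¹ = 1/2
    rw [show ((2:ℕ) : ℝ≥0∞) = 2 by norm_num, pow_one,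
      show (4 : ℝ≥0∞) = 2 * 2 by norm_num,
      ENNReal.mul_inv (Or.inl (by norm_num)) (Or.inl (by norm_num)),
      ← mul_assoc, ENNReal.mul_inv_cancel (by norm_num) (by norm_num), one_mul, one_div]
  · intro η hη
    have hk : (S4.node μ U η).k ≠ 0 := hη
    have hmeas := (S4.node_inv hμ hUm hU34 η).2.2.2.2 hk
    have hle1 : (((S4.node μ U η).k : ℝ≥0∞) + 1) * ((4 : ℝ≥0∞) ^ (η.length + 1))⁻¹ ≤ 1 := by
      rw [← hmeas]; exact prob_le_one
    have hkb : (S4.node μ U η).k + 1 ≤ 4 ^ (η.length + 1) := by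
      have h2 := mul_le_mul_left hle1 ((4 : ℝ≥0∞) ^ (η.length + 1))
      rw [mul_assoc, ENNReal.inv_mul_cancel (pow_ne_zero _ (by norm_num))
        (ENNReal.pow_ne_top (by norm_num)), mul_one, one_mul] at h2
      have h3 : (((S4.node μ U η).k + 1 : ℕ) : ℝ≥0∞) ≤ ((4 ^ (η.length + 1) : ℕ) : ℝ≥0∞) := by
        push_cast
        exact h2
      exact_mod_cast h3
    refine ⟨(S4.node μ U η).k, by omega, by omega, ?_⟩
    rw [S4.limTree_eq hμ hUo hUm hU34]
    exact S4.CC_inter_cyl_measure hμ hUm hU34 η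
end

section
/- Let h : ℕ → ℕ → ℕ be a function such that h(a,b) ≠ h(b,c) whenever a < b < c. Then there exists a strictly increasing function g : ℕ → ℕ such that the sequence n ↦ h(g(n), g(n+1)) is strictly increasing. In particular, for every n* there exist a < b with h(a,b) > n*. -/
open Filter Set

/-- If `h : ℕ → ℕ → ℕ` satisfies `h a b ≠ h b c` whenever `a < b < c`, then there is
a strictly increasing `g : ℕ → ℕ` such that `n ↦ h (g n) (g (n+1))` is strictly
increasing; in particular for every `n*` there are `a < b` with `h a b > n*`. -/
theorem stmt9 (h : ℕ → ℕ → ℕ)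
    (hh : ∀ a b c : ℕ, a < b → b < c → h a b ≠ h b c) :
    (∃ g : ℕ → ℕ, StrictMono g ∧ StrictMono (fun n => h (g n) (g (n + 1)))) ∧
    ∀ nstar : ℕ, ∃ a b : ℕ, a < b ∧ nstar < h a b := by
  classical
  have main : ∃ g : ℕ → ℕ, StrictMono g ∧ StrictMono (fun n => h (g n) (g (n + 1))) := by
    set U : Ultrafilter ℕ := Filter.hyperfilter ℕ with hUdef
    have hcof : ∀ b : ℕ, {c | b < c} ∈ U := by
      intro b
      have : ({c | b < c} : Set ℕ)ᶜ.Finite := by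
        have : ({c | b < c} : Set ℕ)ᶜ = Set.Iic b := by
          ext x; simp [Set.mem_Iic, not_lt]
        rw [this]; exact Set.finite_Iic b
      exact Filter.mem_hyperfilter_of_finite_compl this
    set P : ℕ → ℕ → Prop := fun a b => {c | b < c ∧ h a b < h b c} ∈ U with hPdef
    set Q : ℕ → Prop := fun b => {c | b < c ∧ P b c} ∈ U with hQdef
    by_cases hQU : {b | Q b} ∈ U
    · -- good case: build an increasing chain
      have key : ∀ a b : ℕ, a < b → P a b → Q b →
          ∃ c, b < c ∧ h a b < h b c ∧ P b c ∧ Q c := by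
        intro a b _ hP hQb
        have hmem : {c | b < c ∧ h a b < h b c} ∩ ({c | b < c ∧ P b c} ∩ {b | Q b}) ∈ U :=
          Filter.inter_mem hP (Filter.inter_mem hQb hQU)
        obtain ⟨c, ⟨hc1, hc2⟩, ⟨_, hc3⟩, hc4⟩ := U.nonempty_of_mem hmem
        exact ⟨c, hc1, hc2, hc3, hc4⟩
      have init : ∃ a b : ℕ, a < b ∧ P a b ∧ Q b := by
        obtain ⟨a, ha⟩ := U.nonempty_of_mem hQU
        have hmem : {c | a < c ∧ P a c} ∩ {b | Q b} ∈ U := Filter.inter_mem ha hQU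
        obtain ⟨b, ⟨hb1, hb2⟩, hb3⟩ := U.nonempty_of_mem hmem
        exact ⟨a, b, hb1, hb2, hb3⟩
      obtain ⟨a0, b0, hab0, hP0, hQ0⟩ := init
      have stepex : ∀ s : {p : ℕ × ℕ // p.1 < p.2 ∧ P p.1 p.2 ∧ Q p.2},
          ∃ t : {p : ℕ × ℕ // p.1 < p.2 ∧ P p.1 p.2 ∧ Q p.2},
            t.1.1 = s.1.2 ∧ h s.1.1 s.1.2 < h t.1.1 t.1.2 := by
        rintro ⟨⟨a, b⟩, hab, hP, hQb⟩
        obtain ⟨c, hbc, hlt, hPbc, hQc⟩ := key a b hab hP hQb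
        exact ⟨⟨(b, c), hbc, hPbc, hQc⟩, rfl, hlt⟩
      let step := fun s => (stepex s).choose
      have hstep : ∀ s, (step s).1.1 = s.1.2 ∧ h s.1.1 s.1.2 < h (step s).1.1 (step s).1.2 :=
        fun s => (stepex s).choose_spec
      let seq : ℕ → {p : ℕ × ℕ // p.1 < p.2 ∧ P p.1 p.2 ∧ Q p.2} :=
        fun n => step^[n] ⟨(a0, b0), hab0, hP0, hQ0⟩
      have hseq : ∀ n, seq (n + 1) = step (seq n) := fun n =>
        Function.iterate_succ_apply' step n _
      have hfst : ∀ n, (seq (n + 1)).1.1 = (seq n).1.2 := by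
        intro n; rw [hseq]; exact (hstep (seq n)).1
      refine ⟨fun n => (seq n).1.1, ?_, ?_⟩
      · apply strictMono_nat_of_lt_succ
        intro n
        rw [hfst n]
        exact (seq n).2.1
      · apply strictMono_nat_of_lt_succ
        intro n
        simp only
        rw [hfst (n + 1)]
        have h2 := (hstep (seq n)).2
        rw [← hseq n, ← hfst n] at h2
        exact h2
    · -- bad case: contradiction via infinite descent
      exfalso
      have hT : {b | ¬ Q b} ∈ U := by
        have : ({b | Q b} : Set ℕ)ᶜ ∈ U := (Ultrafilter.compl_mem_iff_notMem).mpr hQU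
        rwa [Set.compl_setOf] at this
      have notP_mem : ∀ b : ℕ, ¬ Q b → {c | ¬ (b < c ∧ P b c)} ∈ U := by
        intro b hb
        have : ({c | b < c ∧ P b c} : Set ℕ)ᶜ ∈ U := (Ultrafilter.compl_mem_iff_notMem).mpr hb
        rwa [Set.compl_setOf] at this
      have key2 : ∀ a b : ℕ, a < b → ¬ P a b → ¬ Q b →
          ∃ c, b < c ∧ h b c < h a b ∧ ¬ P b c ∧ ¬ Q c := by
        intro a b hab hnP hnQ
        have h1 : ({c | b < c ∧ h a b < h b c} : Set ℕ)ᶜ ∈ U :=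
          (Ultrafilter.compl_mem_iff_notMem).mpr hnP
        rw [Set.compl_setOf] at h1
        have hmem : {c | ¬ (b < c ∧ h a b < h b c)} ∩ ({c | b < c} ∩
            ({c | ¬ (b < c ∧ P b c)} ∩ {b | ¬ Q b})) ∈ U :=
          Filter.inter_mem h1 (Filter.inter_mem (hcof b)
            (Filter.inter_mem (notP_mem b hnQ) hT))
        obtain ⟨c, hc1, hc2, hc3, hc4⟩ := U.nonempty_of_mem hmem
        have hbc : b < c := hc2
        have hle : h b c ≤ h a b := by
          by_contra hcon
          exact hc1 ⟨hbc, lt_of_not_ge hcon⟩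
        have hne : h b c ≠ h a b := (hh a b c hab hbc).symm
        have hnPbc : ¬ P b c := fun hp => hc3 ⟨hbc, hp⟩
        exact ⟨c, hbc, lt_of_le_of_ne hle hne, hnPbc, hc4⟩
      have init2 : ∃ a b : ℕ, a < b ∧ ¬ P a b ∧ ¬ Q b := by
        obtain ⟨a, ha⟩ := U.nonempty_of_mem hT
        have hmem : {c | ¬ (a < c ∧ P a c)} ∩ ({c | a < c} ∩ {b | ¬ Q b}) ∈ U :=
          Filter.inter_mem (notP_mem a ha) (Filter.inter_mem (hcof a) hT)
        obtain ⟨b, hb1, hb2, hb3⟩ := U.nonempty_of_mem hmem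
        exact ⟨a, b, hb2, fun hp => hb1 ⟨hb2, hp⟩, hb3⟩
      obtain ⟨a0, b0, hab0, hP0, hQ0⟩ := init2
      have stepex : ∀ s : {p : ℕ × ℕ // p.1 < p.2 ∧ ¬ P p.1 p.2 ∧ ¬ Q p.2},
          ∃ t : {p : ℕ × ℕ // p.1 < p.2 ∧ ¬ P p.1 p.2 ∧ ¬ Q p.2},
            h t.1.1 t.1.2 < h s.1.1 s.1.2 := by
        rintro ⟨⟨a, b⟩, hab, hP, hQb⟩
        obtain ⟨c, hbc, hlt, hPbc, hQc⟩ := key2 a b hab hP hQb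
        exact ⟨⟨(b, c), hbc, hPbc, hQc⟩, hlt⟩
      let step := fun s => (stepex s).choose
      have hstep : ∀ s, h (step s).1.1 (step s).1.2 < h s.1.1 s.1.2 :=
        fun s => (stepex s).choose_spec
      let seq : ℕ → {p : ℕ × ℕ // p.1 < p.2 ∧ ¬ P p.1 p.2 ∧ ¬ Q p.2} :=
        fun n => step^[n] ⟨(a0, b0), hab0, hP0, hQ0⟩
      have hseq : ∀ n, seq (n + 1) = step (seq n) := fun n =>
        Function.iterate_succ_apply' step n _
      set f : ℕ → ℕ := fun n => h (seq n).1.1 (seq n).1.2 with hfdef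
      have hdec : ∀ n, f (n + 1) < f n := by
        intro n
        have := hstep (seq n)
        rw [← hseq n] at this
        exact this
      have hbound : ∀ n, f n + n ≤ f 0 := by
        intro n
        induction n with
        | zero => simp
        | succ k ih => have := hdec k; omega
      have := hbound (f 0 + 1)
      omega
  refine ⟨main, ?_⟩
  obtain ⟨g, hg, hgh⟩ := main
  intro nstar
  refine ⟨g (nstar + 1), g (nstar + 2), hg (by omega), ?_⟩
  have : nstar + 1 ≤ h (g (nstar + 1)) (g (nstar + 1 + 1)) := hgh.le_apply
  simpa using this.trans_lt' (by omega)
end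

section
/- Let μ be the fair-coin product probability measure on Cantor space 2^ω = ℕ → Bool, and let A ⊆ 2^ω be invariant under finite modifications, i.e., whenever x ∈ A and y ∈ 2^ω agrees with x at all but finitely many coordinates, then y ∈ A. Then the outer measure of A satisfies μ*(A) = 0 or μ*(A) = 1. -/
open MeasureTheory ENNReal

namespace ZeroOne

lemma mem_cyl {η : List Bool} {x : ℕ → Bool} :
    x ∈ cylinder η ↔ ∀ i, (h : i < η.length) → x i = η[i] := by
  constructor
  · intro hx i hi; exact hx ⟨i, hi⟩
  · intro hx i; exact hx i i.isLt

lemma measurableSet_coord (n : ℕ) (b : Bool) : MeasurableSet {x : ℕ → Bool | x n = b} := by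
  have : {x : ℕ → Bool | x n = b} = (fun f : ℕ → Bool => f n) ⁻¹' {b} := by
    ext x; simp
  rw [this]
  exact measurable_pi_apply n (by exact MeasurableSpace.measurableSet_top)

lemma measurableSet_cylinder (η : List Bool) : MeasurableSet (cylinder η) := by
  have : cylinder η = ⋂ i : Fin η.length, {x : ℕ → Bool | x i = η.get i} := by
    ext x; exact ⟨fun hx => Set.mem_iInter.mpr fun i => hx i, fun hx i => Set.mem_iInter.mp hx i⟩
  rw [this]
  exact MeasurableSet.iInter fun i => measurableSet_coord i (η.get i)

/-- The collection of cylinders. -/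
def Cyl : Set (Set (ℕ → Bool)) := {S | ∃ η : List Bool, S = cylinder η}

lemma coord_eq_union (n : ℕ) (b : Bool) :
    {x : ℕ → Bool | x n = b} = ⋃ v : Fin n → Bool, cylinder (List.ofFn v ++ [b]) := by
  ext x
  simp only [Set.mem_iUnion, Set.mem_setOf_eq]
  constructor
  · intro hx
    refine ⟨fun j => x j, ?_⟩
    rw [mem_cyl]
    intro i hi
    simp only [List.length_append, List.length_ofFn, List.length_singleton] at hi
    rcases lt_or_ge i n with h | h
    · rw [List.getElem_append_left (by simpa using h)]
      simp
    · have hin : i = n := by omega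
      subst hin
      simp [hx]
  · rintro ⟨v, hv⟩
    rw [mem_cyl] at hv
    have := hv n (by simp)
    simpa using this

lemma gen : (inferInstance : MeasurableSpace (ℕ → Bool)) = .generateFrom Cyl := by
  apply le_antisymm
  · rw [MeasurableSpace.pi_eq_generateFrom_projections]
    apply MeasurableSpace.generateFrom_le
    rintro _ ⟨i, s, -, rfl⟩
    have : Function.eval i ⁻¹' s = ⋃ b ∈ s, {x : ℕ → Bool | x i = b} := by
      ext x; simp [Function.eval]
    rw [this]
    refine MeasurableSet.biUnion (Set.to_countable s) fun b _ => ?_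
    rw [coord_eq_union i b]
    exact MeasurableSet.iUnion fun v =>
      MeasurableSpace.measurableSet_generateFrom ⟨_, rfl⟩
  · apply MeasurableSpace.generateFrom_le
    rintro _ ⟨η, rfl⟩
    exact measurableSet_cylinder η

lemma cylinder_subset {η η' : List Bool} (hle : η.length ≤ η'.length)
    (hne : (cylinder η ∩ cylinder η').Nonempty) : cylinder η' ⊆ cylinder η := by
  obtain ⟨x, hx, hx'⟩ := hne
  rw [mem_cyl] at hx hx'
  intro y hy
  rw [mem_cyl] at hy ⊢
  intro i hi
  rw [hy i (lt_of_lt_of_le hi hle), ← hx' i (lt_of_lt_of_le hi hle), hx i hi]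

lemma isPiSystem_cyl : IsPiSystem Cyl := by
  rintro _ ⟨η, rfl⟩ _ ⟨η', rfl⟩ hne
  rcases le_total η.length η'.length with h | h
  · refine ⟨η', ?_⟩
    rw [Set.inter_eq_right.mpr (cylinder_subset h hne)]
  · refine ⟨η, ?_⟩
    rw [Set.inter_eq_left.mpr (cylinder_subset h (by rwa [Set.inter_comm]))]

/-- Flipping coordinates according to a mask, as a measurable equivalence. -/
def flipE (m : ℕ → Bool) : (ℕ → Bool) ≃ᵐ (ℕ → Bool) where
  toFun x := fun n => xor (m n) (x n)
  invFun x := fun n => xor (m n) (x n)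
  left_inv x := by funext n; simp
  right_inv x := by funext n; simp
  measurable_toFun := by
    apply measurable_pi_lambda
    intro n
    exact (show Measurable (fun c : Bool => xor (m n) c) from fun s _ =>
      MeasurableSpace.measurableSet_top).comp (measurable_pi_apply n)
  measurable_invFun := by
    apply measurable_pi_lambda
    intro n
    exact (show Measurable (fun c : Bool => xor (m n) c) from fun s _ =>
      MeasurableSpace.measurableSet_top).comp (measurable_pi_apply n)

lemma flipE_apply (m : ℕ → Bool) (x : ℕ → Bool) (n : ℕ) :
    flipE m x n = xor (m n) (x n) := rfl

lemma flipE_preimage_cylinder (m : ℕ → Bool) (η : List Bool) :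
    flipE m ⁻¹' cylinder η = cylinder (List.ofFn fun i : Fin η.length => xor (m i) (η.get i)) := by
  ext x
  simp only [Set.mem_preimage]
  rw [mem_cyl, mem_cyl]
  simp only [List.length_ofFn, List.getElem_ofFn, List.get_eq_getElem, flipE_apply]
  constructor
  · intro h i hi
    rw [← h i hi]
    cases m i <;> cases x i <;> rfl
  · intro h i hi
    rw [h i hi]
    cases m i <;> simp

lemma map_flipE (μ : Measure (ℕ → Bool)) [IsProbabilityMeasure μ]
    (hμ : ∀ η : List Bool, μ (cylinder η) = ((2 : ℝ≥0∞) ^ η.length)⁻¹) (m : ℕ → Bool) :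
    μ.map (flipE m) = μ := by
  haveI : IsProbabilityMeasure (μ.map (flipE m)) :=
    Measure.isProbabilityMeasure_map (flipE m).measurable.aemeasurable
  refine ext_of_generate_finite Cyl gen isPiSystem_cyl ?_ ?_
  · rintro _ ⟨η, rfl⟩
    rw [MeasurableEquiv.map_apply, flipE_preimage_cylinder, hμ, hμ]
    simp
  · simp

lemma outer_flipE (μ : Measure (ℕ → Bool)) [IsProbabilityMeasure μ]
    (hμ : ∀ η : List Bool, μ (cylinder η) = ((2 : ℝ≥0∞) ^ η.length)⁻¹) (m : ℕ → Bool)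
    (S : Set (ℕ → Bool)) : μ (flipE m ⁻¹' S) = μ S := by
  conv_rhs => rw [← map_flipE μ hμ m]
  rw [MeasurableEquiv.map_apply]

lemma cylinder_append (l : List Bool) (b : Bool) :
    cylinder (l ++ [b]) = cylinder l ∩ {x | x l.length = b} := by
  ext x
  rw [Set.mem_inter_iff, mem_cyl, mem_cyl]
  simp only [List.length_append, List.length_singleton, Set.mem_setOf_eq]
  constructor
  · intro h
    constructor
    · intro i hi
      have := h i (by omega)
      rwa [List.getElem_append_left hi] at this
    · have := h l.length (by omega)
      simpa using this
  · rintro ⟨h1, h2⟩ i hi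
    rcases lt_or_ge i l.length with h | h
    · rw [List.getElem_append_left h]; exact h1 i h
    · have : i = l.length := by omega
      subst this
      simpa using h2

end ZeroOne

open ZeroOne in
/-- Zero-one law for outer measure: if `μ` is the fair-coin product measure on Cantor
space (characterized by its values `2^{-|η|}` on basic clopen sets) and `A ⊆ 2^ω` is
invariant under finite modifications, then `μ*(A) = 0` or `μ*(A) = 1`. -/
theorem stmt11 (μ : Measure (ℕ → Bool)) [IsProbabilityMeasure μ]
    (hμ : ∀ η : List Bool, μ (cylinder η) = ((2 : ℝ≥0∞) ^ η.length)⁻¹)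
    (A : Set (ℕ → Bool))
    (hinv : ∀ x ∈ A, ∀ y : ℕ → Bool, {n : ℕ | x n ≠ y n}.Finite → y ∈ A) :
    μ A = 0 ∨ μ A = 1 := by
  set t := μ A with ht
  have ht_ne_top : t ≠ ∞ := measure_ne_top μ A
  -- A is invariant under any flip with finite mask support
  have hAflip : ∀ m : ℕ → Bool, {n | m n = true}.Finite → flipE m ⁻¹' A = A := by
    intro m hm
    have hdiff : ∀ x : ℕ → Bool, {n : ℕ | x n ≠ flipE m x n}.Finite := by
      intro x
      apply hm.subset
      intro n hn
      simp only [Set.mem_setOf_eq, flipE_apply] at hn ⊢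
      cases hmn : m n
      · rw [hmn] at hn; simp at hn
      · rfl
    ext x
    constructor
    · intro hx
      exact hinv (flipE m x) hx x (by
        have := hdiff (flipE m x)
        have hxx : ∀ n, flipE m (flipE m x) n = x n := by
          intro n; rw [flipE_apply, flipE_apply]; cases m n <;> simp
        simpa [hxx] using this)
    · intro hx
      exact hinv x hx (flipE m x) (hdiff x)
  -- density: μ (A ∩ cylinder η) = t * (2 ^ |η|)⁻¹
  have hdens : ∀ η : List Bool, μ (A ∩ cylinder η) = t * ((2 : ℝ≥0∞) ^ η.length)⁻¹ := by
    intro η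
    induction η using List.reverseRecOn with
    | nil =>
      have hnil : cylinder ([] : List Bool) = Set.univ := by
        ext x
        simp only [Set.mem_univ, iff_true]
        rw [mem_cyl]
        intro i hi
        simp at hi
      rw [hnil, Set.inter_univ]
      simp [ht]
    | append_singleton l b ih =>
      -- the two halves
      have hsplit : μ (A ∩ cylinder (l ++ [false])) + μ (A ∩ cylinder (l ++ [true]))
          = μ (A ∩ cylinder l) := by
        have hE : MeasurableSet {x : ℕ → Bool | x l.length = false} :=
          measurableSet_coord l.length false
        have e1 : A ∩ cylinder (l ++ [false])
            = (A ∩ cylinder l) ∩ {x | x l.length = false} := by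
          rw [cylinder_append, Set.inter_assoc]
        have e2 : A ∩ cylinder (l ++ [true])
            = (A ∩ cylinder l) \ {x | x l.length = false} := by
          rw [cylinder_append]
          ext x
          simp only [Set.mem_inter_iff, Set.mem_diff, Set.mem_setOf_eq]
          constructor
          · rintro ⟨hxA, hxl, hxc⟩
            exact ⟨⟨hxA, hxl⟩, by rw [hxc]; simp⟩
          · rintro ⟨⟨hxA, hxl⟩, hxc⟩
            refine ⟨hxA, hxl, ?_⟩
            cases h : x l.length
            · exact absurd h hxc
            · rfl
        rw [e1, e2]
        exact measure_inter_add_diff (A ∩ cylinder l) hE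
      -- the two halves are equal, via flipping coordinate l.length
      have heq : μ (A ∩ cylinder (l ++ [false])) = μ (A ∩ cylinder (l ++ [true])) := by
        set m : ℕ → Bool := fun k => decide (k = l.length) with hm
        have hmfin : {n | m n = true}.Finite := by
          apply Set.Finite.subset (Set.finite_singleton l.length)
          intro n hn
          simp only [hm, Set.mem_setOf_eq, decide_eq_true_eq] at hn
          simp [hn]
        have hpre : flipE m ⁻¹' (A ∩ cylinder (l ++ [true])) = A ∩ cylinder (l ++ [false]) := by
          rw [Set.preimage_inter, hAflip m hmfin]
          congr 1
          rw [cylinder_append, cylinder_append, Set.preimage_inter]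
          have c1 : flipE m ⁻¹' cylinder l = cylinder l := by
            ext x
            simp only [Set.mem_preimage]
            rw [mem_cyl, mem_cyl]
            constructor
            · intro h i hi
              have := h i hi
              rwa [flipE_apply, show m i = false by simp [hm]; omega, Bool.false_xor] at this
            · intro h i hi
              rw [flipE_apply, show m i = false by simp [hm]; omega, Bool.false_xor]
              exact h i hi
          have c2 : flipE m ⁻¹' {x : ℕ → Bool | x l.length = true}
              = {x : ℕ → Bool | x l.length = false} := by
            ext x
            simp only [Set.mem_preimage, Set.mem_setOf_eq, flipE_apply]
            rw [show m l.length = true by simp [hm]]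
            cases x l.length <;> simp
          rw [c1, c2]
        rw [← hpre, outer_flipE μ hμ]
      -- combine
      have h2 : μ (A ∩ cylinder (l ++ [b])) + μ (A ∩ cylinder (l ++ [b]))
          = t * ((2 : ℝ≥0∞) ^ l.length)⁻¹ := by
        cases b
        · rw [← ih, ← hsplit]; rw [heq]
        · rw [← ih, ← hsplit]; rw [heq]
      have hlen : (l ++ [b]).length = l.length + 1 := by simp
      rw [hlen, pow_succ, ENNReal.mul_inv (by left; positivity) (by left; simp), ← mul_assoc]
      have h2' : 2 * μ (A ∩ cylinder (l ++ [b])) = t * ((2 : ℝ≥0∞) ^ l.length)⁻¹ := by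
        rw [two_mul]; exact h2
      have hfin := congrArg (fun z => (2 : ℝ≥0∞)⁻¹ * z) h2'
      simp only [← mul_assoc, ENNReal.inv_mul_cancel (two_ne_zero) (by simp), one_mul] at hfin
      rw [hfin]; ring
  -- measurable hull
  set B := toMeasurable μ A with hB
  have hBmeas : MeasurableSet B := measurableSet_toMeasurable μ A
  have hBμ : μ B = t := measure_toMeasurable A
  have hrestrict : μ.restrict B = t • μ := by
    refine ext_of_generate_finite Cyl gen isPiSystem_cyl ?_ ?_
    · rintro _ ⟨η, rfl⟩
      rw [Measure.restrict_apply (measurableSet_cylinder η), Measure.smul_apply,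
        Set.inter_comm, Measure.measure_toMeasurable_inter (measurableSet_cylinder η) ht_ne_top,
        hdens η, hμ η, smul_eq_mul]
    · rw [Measure.restrict_apply_univ, hBμ, Measure.smul_apply, smul_eq_mul,
        measure_univ, mul_one]
  have hkey : t = t * t := by
    have h1 : μ.restrict B B = t := by
      rw [Measure.restrict_apply hBmeas, Set.inter_self, hBμ]
    have h2 : (t • μ) B = t * t := by
      rw [Measure.smul_apply, smul_eq_mul, hBμ]
    calc t = (μ.restrict B) B := h1.symm
      _ = (t • μ) B := by rw [hrestrict]
      _ = t * t := h2
  by_cases h0 : t = 0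
  · exact Or.inl h0
  · exact Or.inr (((ENNReal.mul_right_inj h0 ht_ne_top).mp
      (by rw [mul_one, ← hkey])).symm)
end
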